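/- arXiv:1910.08511 — 2 statements merged into one kernel-verified Lean document; each statement's English description precedes it below -/
import Mathlib

section
/- Let (X_{ij})_{i,j∈ℤ} be a stationary m-dependent random field that is regularly varying with index α∈[2,4). Fix β with 4/(3α) < β < 2(8−α)/(α(10−α)), η with 2/3 < η < 1 and η > αβ−1, and κ > η, and set ε̃_n := b_n^{(κ−1)/2}. Then, as n→∞: (i) ℙ(there exist 1≤i,j,k≤k_n with j≠k such that ‖B̂_{ij}‖_max>ε̃_n and ‖B̂_{ik}‖_max>ε̃_n) → 0; and (ii) ℙ(there exists 1≤i≤k_n such that ‖B̂_{ii}‖_max>ε̃_n) → 0. -/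
open MeasureTheory ProbabilityTheory Filter Matrix

noncomputable section


-- ========================= auxiliary lemmas =========================
section StmtSevenAux

open Filter

/-- doubling upper tail bound -/
lemma stmt7_tail_upper (T : ℝ → ℝ) (hmono : Antitone T) (hpos : ∀ x, 0 < x → 0 < T x)
    (α θ : ℝ) (hθ : 0 < θ) (hθα : θ < α)
    (hlim : Tendsto (fun x => T (2*x) / T x) atTop (nhds ((2:ℝ) ^ (-α)))) :
    ∃ C, 0 < C ∧ ∃ x₀, 1 ≤ x₀ ∧ ∀ x, x₀ ≤ x → T x ≤ C * x ^ (-θ) := by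
  have hρ : (2:ℝ) ^ (-α) < 2 ^ (-θ) := by
    apply Real.rpow_lt_rpow_left_iff (by norm_num) |>.mpr; linarith
  obtain ⟨x₀, hx₀⟩ := (eventually_atTop.1 ((hlim.eventually_lt_const hρ).and (eventually_ge_atTop 1)))
  have hx₀1 : (1:ℝ) ≤ x₀ := (hx₀ x₀ le_rfl).2
  have hx₀pos : (0:ℝ) < x₀ := lt_of_lt_of_le one_pos hx₀1
  have hstep : ∀ x, x₀ ≤ x → T (2*x) ≤ 2 ^ (-θ) * T x := by
    intro x hx
    have hTx : 0 < T x := hpos x (lt_of_lt_of_le hx₀pos hx)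
    have := (hx₀ x hx).1
    rw [div_lt_iff₀ hTx] at this
    linarith
  have hiter : ∀ k : ℕ, T (2^k * x₀) ≤ ((2:ℝ) ^ (-θ))^k * T x₀ := by
    intro k; induction k with
    | zero => simp
    | succ k ih =>
      have h1 : T (2^(k+1) * x₀) = T (2 * (2^k * x₀)) := by ring_nf
      have h2 : x₀ ≤ 2^k * x₀ := le_mul_of_one_le_left hx₀pos.le (one_le_pow₀ (by norm_num))
      calc T (2^(k+1) * x₀) = T (2 * (2^k * x₀)) := h1
        _ ≤ 2 ^ (-θ) * T (2^k * x₀) := hstep _ h2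
        _ ≤ 2 ^ (-θ) * (((2:ℝ) ^ (-θ))^k * T x₀) := by
            apply mul_le_mul_of_nonneg_left ih (Real.rpow_nonneg (by norm_num) _)
        _ = ((2:ℝ) ^ (-θ))^(k+1) * T x₀ := by ring
  have hT0 : 0 < T x₀ := hpos x₀ hx₀pos
  refine ⟨T x₀ * (2*x₀) ^ θ, mul_pos hT0 (by positivity), x₀, hx₀1, fun x hx => ?_⟩
  obtain ⟨k, hk1, hk2⟩ := exists_nat_pow_near (show (1:ℝ) ≤ x / x₀ by
    rw [le_div_iff₀ hx₀pos]; linarith) (show (1:ℝ) < 2 by norm_num)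
  have hxk : 2^k * x₀ ≤ x := by rw [← le_div_iff₀ hx₀pos]; exact hk1
  have hxpos : 0 < x := lt_of_lt_of_le hx₀pos hx
  have key : T x ≤ ((2:ℝ)^(-θ))^k * T x₀ := (hmono hxk).trans (hiter k)
  have hpow : ((2:ℝ)^(-θ))^k = ((2:ℝ)^k) ^ (-θ) := by
    rw [← Real.rpow_natCast ((2:ℝ)^(-θ)) k, ← Real.rpow_mul (by norm_num),
      ← Real.rpow_natCast (2:ℝ) k, ← Real.rpow_mul (by norm_num)]
    ring_nf
  have h2k : x / (2 * x₀) ≤ (2:ℝ)^k := by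
    rw [div_le_iff₀ (by positivity)]
    rw [div_lt_iff₀ hx₀pos] at hk2
    have : (2:ℝ)^(k+1) * x₀ = 2^k * (2*x₀) := by ring
    linarith [hk2, this.symm ▸ hk2]
  have hbase : (0:ℝ) < x / (2 * x₀) := by positivity
  have : ((2:ℝ)^k) ^ (-θ) ≤ (x / (2*x₀)) ^ (-θ) :=
    Real.rpow_le_rpow_of_nonpos hbase h2k (by linarith)
  have hfin : (x / (2*x₀)) ^ (-θ) = (2*x₀) ^ θ * x ^ (-θ) := by
    rw [Real.div_rpow hxpos.le (by positivity), Real.rpow_neg hxpos.le,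
      Real.rpow_neg (by positivity : (0:ℝ) ≤ 2*x₀)]
    field_simp
  calc T x ≤ ((2:ℝ)^(-θ))^k * T x₀ := key
    _ = ((2:ℝ)^k) ^ (-θ) * T x₀ := by rw [hpow]
    _ ≤ (x / (2*x₀)) ^ (-θ) * T x₀ := by apply mul_le_mul_of_nonneg_right this hT0.le
    _ = T x₀ * (2*x₀) ^ θ * x ^ (-θ) := by rw [hfin]; ring

/-- doubling lower tail bound -/
lemma stmt7_tail_lower (T : ℝ → ℝ) (hmono : Antitone T) (hpos : ∀ x, 0 < x → 0 < T x)
    (α θ' : ℝ) (hθ : 0 < θ') (hθα : α < θ')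
    (hlim : Tendsto (fun x => T (2*x) / T x) atTop (nhds ((2:ℝ) ^ (-α)))) :
    ∃ c, 0 < c ∧ ∃ x₀, 1 ≤ x₀ ∧ ∀ x, x₀ ≤ x → c * x ^ (-θ') ≤ T x := by
  have hρ : (2:ℝ) ^ (-θ') < 2 ^ (-α) := by
    apply Real.rpow_lt_rpow_left_iff (by norm_num) |>.mpr; linarith
  obtain ⟨x₀, hx₀⟩ := (eventually_atTop.1 ((hlim.eventually_const_lt hρ).and (eventually_ge_atTop 1)))
  have hx₀1 : (1:ℝ) ≤ x₀ := (hx₀ x₀ le_rfl).2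
  have hx₀pos : (0:ℝ) < x₀ := lt_of_lt_of_le one_pos hx₀1
  have hstep : ∀ x, x₀ ≤ x → 2 ^ (-θ') * T x ≤ T (2*x) := by
    intro x hx
    have hTx : 0 < T x := hpos x (lt_of_lt_of_le hx₀pos hx)
    have := (hx₀ x hx).1
    rw [lt_div_iff₀ hTx] at this
    linarith
  have hiter : ∀ k : ℕ, ((2:ℝ) ^ (-θ'))^k * T x₀ ≤ T (2^k * x₀) := by
    intro k; induction k with
    | zero => simp
    | succ k ih =>
      have h2 : x₀ ≤ 2^k * x₀ := le_mul_of_one_le_left hx₀pos.le (one_le_pow₀ (by norm_num))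
      calc ((2:ℝ) ^ (-θ'))^(k+1) * T x₀ = 2 ^ (-θ') * (((2:ℝ) ^ (-θ'))^k * T x₀) := by ring
        _ ≤ 2 ^ (-θ') * T (2^k * x₀) := by
            apply mul_le_mul_of_nonneg_left ih (Real.rpow_nonneg (by norm_num) _)
        _ ≤ T (2 * (2^k * x₀)) := hstep _ h2
        _ = T (2^(k+1) * x₀) := by ring_nf
  have hT0 : 0 < T x₀ := hpos x₀ hx₀pos
  refine ⟨T x₀ * (2/x₀) ^ (-θ'), mul_pos hT0 (by positivity), x₀, hx₀1, fun x hx => ?_⟩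
  obtain ⟨k, hk1, hk2⟩ := exists_nat_pow_near (show (1:ℝ) ≤ x / x₀ by
    rw [le_div_iff₀ hx₀pos]; linarith) (show (1:ℝ) < 2 by norm_num)
  have hxpos : 0 < x := lt_of_lt_of_le hx₀pos hx
  have hxk : x ≤ 2^(k+1) * x₀ := by rw [div_lt_iff₀ hx₀pos] at hk2; linarith
  have key : ((2:ℝ)^(-θ'))^(k+1) * T x₀ ≤ T x := (hiter (k+1)).trans (hmono hxk)
  have hpow : ((2:ℝ)^(-θ'))^(k+1) = ((2:ℝ)^(k+1)) ^ (-θ') := by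
    rw [← Real.rpow_natCast ((2:ℝ)^(-θ')) (k+1), ← Real.rpow_mul (by norm_num),
      ← Real.rpow_natCast (2:ℝ) (k+1), ← Real.rpow_mul (by norm_num)]
    ring_nf
  have h2k : (2:ℝ)^(k+1) ≤ 2 * x / x₀ := by
    rw [le_div_iff₀ hx₀pos] at hk1 ⊢
    calc (2:ℝ)^(k+1) * x₀ = 2 * (2^k * x₀) := by ring
      _ ≤ 2 * x := by nlinarith [hk1]
  have : (2 * x / x₀) ^ (-θ') ≤ ((2:ℝ)^(k+1)) ^ (-θ') :=
    Real.rpow_le_rpow_of_nonpos (by positivity) h2k (by linarith)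
  have hfin : (2 * x / x₀) ^ (-θ') = (2/x₀) ^ (-θ') * x ^ (-θ') := by
    rw [show 2 * x / x₀ = (2/x₀) * x by ring, Real.mul_rpow (by positivity) hxpos.le]
  calc T x₀ * (2/x₀) ^ (-θ') * x ^ (-θ') = T x₀ * (2 * x / x₀) ^ (-θ') := by rw [hfin]; ring
    _ ≤ T x₀ * ((2:ℝ)^(k+1)) ^ (-θ') := by
        apply mul_le_mul_of_nonneg_left this hT0.le
    _ = ((2:ℝ)^(-θ'))^(k+1) * T x₀ := by rw [hpow]; ring
    _ ≤ T x := key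

-- ------------------- counting -------------------

/-- The `i`-th block of indices, `(i-1)*r < p ≤ i*r`. -/
def blkN (r i : ℕ) : Finset ℕ := Finset.Ioc ((i-1)*r) (i*r)

lemma card_blkN (r i : ℕ) (hi : 1 ≤ i) : (blkN r i).card = r := by
  obtain ⟨j, rfl⟩ : ∃ j, i = j + 1 := ⟨i-1, by omega⟩
  simp only [blkN, Nat.card_Ioc, Nat.add_sub_cancel, Nat.succ_mul]
  omega

lemma mem_blkN {r i p : ℕ} : p ∈ blkN r i ↔ (i-1)*r < p ∧ p ≤ i*r := Finset.mem_Ioc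

/-- The set of `m`-close pairs between block `a` and block `b`. -/
def cpairSet (r m a b : ℕ) : Finset (ℕ × ℕ) :=
  (blkN r a ×ˢ blkN r b).filter (fun e => e.1 ≤ e.2 + m ∧ e.2 ≤ e.1 + m)

lemma cpair_le_same (r m i : ℕ) (hi : 1 ≤ i) : (cpairSet r m i i).card ≤ r * (2*m+1) := by
  have : (cpairSet r m i i).card ≤ (blkN r i ×ˢ Finset.range (2*m+1)).card := by
    apply Finset.card_le_card_of_injOn (fun e => (e.1, e.2 + m - e.1))
    · intro e he
      simp only [Finset.mem_coe, cpairSet, Finset.mem_filter, Finset.mem_product, mem_blkN] at he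
      simp only [Finset.mem_coe, Finset.mem_product, Finset.mem_range, mem_blkN]
      omega
    · intro e₁ h₁ e₂ h₂ h
      simp only [cpairSet, Finset.coe_filter, Set.mem_setOf_eq, Finset.mem_product,
        mem_blkN] at h₁ h₂
      simp only [Prod.mk.injEq] at h
      have : e₁.2 = e₂.2 := by omega
      exact Prod.ext h.1 this
  simpa [Finset.card_product, card_blkN r i hi] using this

lemma cpair_le_ne (r m i j : ℕ) (hi : 1 ≤ i) (hj : 1 ≤ j) (hij : i ≠ j) :
    (cpairSet r m i j).card ≤ m * (2*m+1) := by
  rcases Nat.lt_or_ge i j with hlt | hge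
  · have hmul : i * r ≤ (j-1) * r := Nat.mul_le_mul_right r (by omega)
    have : (cpairSet r m i j).card ≤ (Finset.range m ×ˢ Finset.range (2*m+1)).card := by
      apply Finset.card_le_card_of_injOn (fun e => (i*r - e.1, e.2 + m - e.1))
      · intro e he
        simp only [Finset.mem_coe, cpairSet, Finset.mem_filter, Finset.mem_product, mem_blkN] at he
        simp only [Finset.mem_coe, Finset.mem_product, Finset.mem_range]
        omega
      · intro e₁ h₁ e₂ h₂ h
        simp only [cpairSet, Finset.coe_filter, Set.mem_setOf_eq, Finset.mem_product,
          mem_blkN] at h₁ h₂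
        simp only [Prod.mk.injEq] at h
        have he1 : e₁.1 = e₂.1 := by omega
        have : e₁.2 = e₂.2 := by omega
        exact Prod.ext he1 this
    simpa using this
  · have hlt : j < i := by omega
    have hmul : j * r ≤ (i-1) * r := Nat.mul_le_mul_right r (by omega)
    have : (cpairSet r m i j).card ≤ (Finset.range m ×ˢ Finset.range (2*m+1)).card := by
      apply Finset.card_le_card_of_injOn (fun e => (j*r - e.2, e.1 + m - e.2))
      · intro e he
        simp only [Finset.mem_coe, cpairSet, Finset.mem_filter, Finset.mem_product, mem_blkN] at he
        simp only [Finset.mem_coe, Finset.mem_product, Finset.mem_range]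
        omega
      · intro e₁ h₁ e₂ h₂ h
        simp only [cpairSet, Finset.coe_filter, Set.mem_setOf_eq, Finset.mem_product,
          mem_blkN] at h₁ h₂
        simp only [Prod.mk.injEq] at h
        have he2 : e₁.2 = e₂.2 := by omega
        have : e₁.1 = e₂.1 := by omega
        exact Prod.ext this he2
    simpa using this

lemma cpair_eq_zero (r m i j : ℕ) (hi : 1 ≤ i) (hj : 1 ≤ j) (hm : m < r)
    (h : i + 1 < j ∨ j + 1 < i) : (cpairSet r m i j).card = 0 := by
  rw [Finset.card_eq_zero, Finset.eq_empty_iff_forall_notMem]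
  intro e he
  simp only [cpairSet, Finset.mem_filter, Finset.mem_product, mem_blkN] at he
  rcases h with h | h
  · have hmul : (i+1) * r ≤ (j-1) * r := Nat.mul_le_mul_right r (by omega)
    have : (i+1) * r = i*r + r := by ring
    omega
  · have hmul : (j+1) * r ≤ (i-1) * r := Nat.mul_le_mul_right r (by omega)
    have : (j+1) * r = j*r + r := by ring
    omega

lemma cpair_le_ite (r m i l : ℕ) (hi : 1 ≤ i) (hl : 1 ≤ l) (hm : m < r) :
    (cpairSet r m i l).card ≤ if (l = i ∨ l = i+1 ∨ l+1 = i) then r * (2*m+1) else 0 := by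
  split_ifs with h
  · rcases eq_or_ne i l with rfl | hne
    · exact cpair_le_same r m i hi
    · exact (cpair_le_ne r m i l hi hl hne).trans (Nat.mul_le_mul_right _ (by omega))
  · rw [cpair_eq_zero r m i l hi hl hm (by omega)]

lemma sum_cpair_le (r m i k : ℕ) (hi : 1 ≤ i) (hm : m < r) :
    ∑ l ∈ Finset.Icc 1 k, (cpairSet r m i l).card ≤ 3 * (r * (2*m+1)) := by
  calc ∑ l ∈ Finset.Icc 1 k, (cpairSet r m i l).card
      ≤ ∑ l ∈ Finset.Icc 1 k, if (l = i ∨ l = i+1 ∨ l+1 = i) then r * (2*m+1) else 0 := by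
        apply Finset.sum_le_sum
        intro l hl
        exact cpair_le_ite r m i l hi (Finset.mem_Icc.1 hl).1 hm
    _ = ∑ l ∈ (Finset.Icc 1 k).filter (fun l => l = i ∨ l = i+1 ∨ l+1 = i), r * (2*m+1) := by
        rw [Finset.sum_filter]
    _ ≤ 3 * (r * (2*m+1)) := by
        rw [Finset.sum_const, smul_eq_mul]
        apply Nat.mul_le_mul_right
        have : (Finset.Icc 1 k).filter (fun l => l = i ∨ l = i+1 ∨ l+1 = i) ⊆ {i, i+1, i-1} := by
          intro l hl
          simp only [Finset.mem_filter] at hl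
          simp only [Finset.mem_insert, Finset.mem_singleton]
          omega
        exact (Finset.card_le_card this).trans (by
          apply (Finset.card_insert_le _ _).trans
          simp [Finset.card_insert_le]
          exact Nat.le_of_lt_succ (by
            have := Finset.card_insert_le (i+1) ({i-1} : Finset ℕ)
            simp at this ⊢
            omega))

lemma sum_cpair_le' (r m i k : ℕ) (hi : 1 ≤ i) (hm : m < r) :
    ∑ j ∈ Finset.Icc 1 k, (cpairSet r m j i).card ≤ 3 * (r * (2*m+1)) := by
  calc ∑ j ∈ Finset.Icc 1 k, (cpairSet r m j i).card
      ≤ ∑ j ∈ Finset.Icc 1 k, if (j = i ∨ j = i+1 ∨ j+1 = i) then r * (2*m+1) else 0 := by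
        apply Finset.sum_le_sum
        intro j hj
        have hj1 : 1 ≤ j := (Finset.mem_Icc.1 hj).1
        split_ifs with h
        · rcases eq_or_ne j i with rfl | hne
          · exact cpair_le_same r m j hj1
          · exact (cpair_le_ne r m j i hj1 hi hne).trans (Nat.mul_le_mul_right _ (by omega))
        · rw [cpair_eq_zero r m j i hj1 hi hm (by omega)]
    _ = ∑ j ∈ (Finset.Icc 1 k).filter (fun j => j = i ∨ j = i+1 ∨ j+1 = i), r * (2*m+1) := by
        rw [Finset.sum_filter]
    _ ≤ 3 * (r * (2*m+1)) := by
        rw [Finset.sum_const, smul_eq_mul]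
        apply Nat.mul_le_mul_right
        have hsub : (Finset.Icc 1 k).filter (fun j => j = i ∨ j = i+1 ∨ j+1 = i) ⊆
            {i, i+1, i-1} := by
          intro j hj
          simp only [Finset.mem_filter] at hj
          simp only [Finset.mem_insert, Finset.mem_singleton]
          omega
        refine (Finset.card_le_card hsub).trans ?_
        refine (Finset.card_insert_le _ _).trans ?_
        have := Finset.card_insert_le (i+1) ({i-1} : Finset ℕ)
        simp at this ⊢
        omega

lemma sum_cpair_ne_le (r m j k : ℕ) (hj : 1 ≤ j) (hm : m < r) :
    ∑ l ∈ Finset.Icc 1 k, (if j = l then 0 else (cpairSet r m j l).card)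
      ≤ 2 * (m * (2*m+1)) := by
  calc ∑ l ∈ Finset.Icc 1 k, (if j = l then 0 else (cpairSet r m j l).card)
      ≤ ∑ l ∈ Finset.Icc 1 k, if (l = j+1 ∨ l+1 = j) then m * (2*m+1) else 0 := by
        apply Finset.sum_le_sum
        intro l hl
        have hl1 : 1 ≤ l := (Finset.mem_Icc.1 hl).1
        rcases eq_or_ne j l with rfl | hne
        · simp
        · rw [if_neg hne]
          split_ifs with h
          · exact cpair_le_ne r m j l hj hl1 hne
          · rw [cpair_eq_zero r m j l hj hl1 hm (by omega)]
    _ = ∑ l ∈ (Finset.Icc 1 k).filter (fun l => l = j+1 ∨ l+1 = j), m * (2*m+1) := by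
        rw [Finset.sum_filter]
    _ ≤ 2 * (m * (2*m+1)) := by
        rw [Finset.sum_const, smul_eq_mul]
        apply Nat.mul_le_mul_right
        have hsub : (Finset.Icc 1 k).filter (fun l => l = j+1 ∨ l+1 = j) ⊆
            {j+1, j-1} := by
          intro l hl
          simp only [Finset.mem_filter] at hl
          simp only [Finset.mem_insert, Finset.mem_singleton]
          omega
        refine (Finset.card_le_card hsub).trans ?_
        refine (Finset.card_insert_le _ _).trans ?_
        simp

/-- quadruples `((p,q),(p',q'))` with `p,p' ∈ blk i`, `q ∈ blk j`, `q' ∈ blk l`. -/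
def quadSet (r i j l : ℕ) : Finset ((ℕ×ℕ)×(ℕ×ℕ)) :=
  (blkN r i ×ˢ blkN r j) ×ˢ (blkN r i ×ˢ blkN r l)

def closeAN (m : ℕ) (e : (ℕ×ℕ)×(ℕ×ℕ)) : Prop :=
  e.1.1 ≤ e.2.1 + m ∧ e.2.1 ≤ e.1.1 + m ∧ e.1.2 ≤ e.2.2 + m ∧ e.2.2 ≤ e.1.2 + m

def closeBN (m : ℕ) (e : (ℕ×ℕ)×(ℕ×ℕ)) : Prop :=
  e.1.1 ≤ e.2.2 + m ∧ e.2.2 ≤ e.1.1 + m ∧ e.1.2 ≤ e.2.1 + m ∧ e.2.1 ≤ e.1.2 + m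

instance (m : ℕ) : DecidablePred (closeAN m) := fun e => by unfold closeAN; infer_instance
instance (m : ℕ) : DecidablePred (closeBN m) := fun e => by unfold closeBN; infer_instance

lemma cardA_le (r m i j l : ℕ) :
    ((quadSet r i j l).filter (closeAN m)).card ≤
      (cpairSet r m i i).card * (cpairSet r m j l).card := by
  rw [← Finset.card_product]
  apply Finset.card_le_card_of_injOn (fun e => ((e.1.1, e.2.1), (e.1.2, e.2.2)))
  · intro e he
    simp only [Finset.mem_coe, quadSet, closeAN, Finset.mem_filter, Finset.mem_product] at he
    simp only [Finset.mem_coe, cpairSet, Finset.mem_filter, Finset.mem_product]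
    tauto
  · intro e₁ _ e₂ _ h
    simp only [Prod.mk.injEq] at h
    obtain ⟨⟨h1, h2⟩, h3, h4⟩ := h
    exact Prod.ext (Prod.ext h1 h3) (Prod.ext h2 h4)

lemma cardB_le (r m i j l : ℕ) :
    ((quadSet r i j l).filter (closeBN m)).card ≤
      (cpairSet r m i l).card * (cpairSet r m j i).card := by
  rw [← Finset.card_product]
  apply Finset.card_le_card_of_injOn (fun e => ((e.1.1, e.2.2), (e.1.2, e.2.1)))
  · intro e he
    simp only [Finset.mem_coe, quadSet, closeBN, Finset.mem_filter, Finset.mem_product] at he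
    simp only [Finset.mem_coe, cpairSet, Finset.mem_filter, Finset.mem_product]
    tauto
  · intro e₁ _ e₂ _ h
    simp only [Prod.mk.injEq] at h
    obtain ⟨⟨h1, h2⟩, h3, h4⟩ := h
    exact Prod.ext (Prod.ext h1 h3) (Prod.ext h4 h2)

lemma total_close_le (k r m : ℕ) (hm : m < r) :
    ∑ i ∈ Finset.Icc 1 k, ∑ j ∈ Finset.Icc 1 k, ∑ l ∈ Finset.Icc 1 k,
      (if j = l then 0
        else ((quadSet r i j l).filter (fun e => closeAN m e ∨ closeBN m e)).card)
      ≤ k * (r*(2*m+1)) * (k * (2*(m*(2*m+1)))) + k * ((3*(r*(2*m+1))) * (3*(r*(2*m+1)))) := by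
  have hsplit : ∀ i ∈ Finset.Icc 1 k, ∀ j ∈ Finset.Icc 1 k, ∀ l ∈ Finset.Icc 1 k,
      (if j = l then 0
        else ((quadSet r i j l).filter (fun e => closeAN m e ∨ closeBN m e)).card)
      ≤ (cpairSet r m i i).card * (if j = l then 0 else (cpairSet r m j l).card)
        + (cpairSet r m i l).card * (cpairSet r m j i).card := by
    intro i _ j _ l _
    rcases eq_or_ne j l with rfl | hne
    · simp
    · rw [if_neg hne, if_neg hne]
      calc ((quadSet r i j l).filter (fun e => closeAN m e ∨ closeBN m e)).card
          ≤ ((quadSet r i j l).filter (closeAN m)).card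
            + ((quadSet r i j l).filter (closeBN m)).card := by
            rw [Finset.filter_or]
            exact Finset.card_union_le _ _
        _ ≤ _ := Nat.add_le_add (cardA_le r m i j l) (cardB_le r m i j l)
  calc ∑ i ∈ Finset.Icc 1 k, ∑ j ∈ Finset.Icc 1 k, ∑ l ∈ Finset.Icc 1 k,
      (if j = l then 0
        else ((quadSet r i j l).filter (fun e => closeAN m e ∨ closeBN m e)).card)
      ≤ ∑ i ∈ Finset.Icc 1 k, ∑ j ∈ Finset.Icc 1 k, ∑ l ∈ Finset.Icc 1 k,
        ((cpairSet r m i i).card * (if j = l then 0 else (cpairSet r m j l).card)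
          + (cpairSet r m i l).card * (cpairSet r m j i).card) := by
        apply Finset.sum_le_sum; intro i hi
        apply Finset.sum_le_sum; intro j hj
        apply Finset.sum_le_sum; intro l hl
        exact hsplit i hi j hj l hl
    _ ≤ _ := by
        simp only [Finset.sum_add_distrib]
        apply Nat.add_le_add
        · calc ∑ i ∈ Finset.Icc 1 k, ∑ j ∈ Finset.Icc 1 k, ∑ l ∈ Finset.Icc 1 k,
              (cpairSet r m i i).card * (if j = l then 0 else (cpairSet r m j l).card)
              ≤ ∑ i ∈ Finset.Icc 1 k, ∑ j ∈ Finset.Icc 1 k,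
                  (cpairSet r m i i).card * (2*(m*(2*m+1))) := by
                apply Finset.sum_le_sum; intro i hi
                apply Finset.sum_le_sum; intro j hj
                rw [← Finset.mul_sum]
                exact Nat.mul_le_mul_left _
                  (sum_cpair_ne_le r m j k (Finset.mem_Icc.1 hj).1 hm)
            _ ≤ ∑ i ∈ Finset.Icc 1 k, ∑ _j ∈ Finset.Icc 1 k, (r*(2*m+1)) * (2*(m*(2*m+1))) := by
                apply Finset.sum_le_sum; intro i hi
                apply Finset.sum_le_sum; intro j hj
                exact Nat.mul_le_mul_right _ (cpair_le_same r m i (Finset.mem_Icc.1 hi).1)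
            _ ≤ k * (r*(2*m+1)) * (k * (2*(m*(2*m+1)))) := by
                simp only [Finset.sum_const, smul_eq_mul]
                have : (Finset.Icc 1 k).card ≤ k := by simp [Nat.card_Icc]
                calc (Finset.Icc 1 k).card * ((Finset.Icc 1 k).card * ((r*(2*m+1)) * (2*(m*(2*m+1)))))
                    ≤ k * (k * ((r*(2*m+1)) * (2*(m*(2*m+1))))) :=
                      Nat.mul_le_mul this (Nat.mul_le_mul this le_rfl)
                  _ = k * (r*(2*m+1)) * (k * (2*(m*(2*m+1)))) := by ring
        · calc ∑ i ∈ Finset.Icc 1 k, ∑ j ∈ Finset.Icc 1 k, ∑ l ∈ Finset.Icc 1 k,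
              (cpairSet r m i l).card * (cpairSet r m j i).card
              = ∑ i ∈ Finset.Icc 1 k,
                  (∑ l ∈ Finset.Icc 1 k, (cpairSet r m i l).card)
                  * (∑ j ∈ Finset.Icc 1 k, (cpairSet r m j i).card) := by
                apply Finset.sum_congr rfl; intro i _
                rw [Finset.sum_mul_sum, Finset.sum_comm]
            _ ≤ ∑ i ∈ Finset.Icc 1 k, (3*(r*(2*m+1))) * (3*(r*(2*m+1))) := by
                apply Finset.sum_le_sum; intro i hi
                have hi1 := (Finset.mem_Icc.1 hi).1
                exact Nat.mul_le_mul (sum_cpair_le r m i k hi1 hm) (sum_cpair_le' r m i k hi1 hm)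
            _ ≤ k * ((3*(r*(2*m+1))) * (3*(r*(2*m+1)))) := by
                simp only [Finset.sum_const, smul_eq_mul]
                exact Nat.mul_le_mul_right _ (by simp [Nat.card_Icc])

end StmtSevenAux
-- ========================= end auxiliary =========================

/-- A real-valued random field indexed by `ℤ × ℤ` is stationary if its finite-dimensional
distributions are invariant under all shifts of `ℤ²`. -/
def IsStationaryField {Ω : Type*} [MeasurableSpace Ω] (μ : Measure Ω)
    (X : ℤ × ℤ → Ω → ℝ) : Prop :=
  ∀ a b : ℤ,
    Measure.map (fun ω => fun p : ℤ × ℤ => X (p.1 + a, p.2 + b) ω) μ =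
      Measure.map (fun ω => fun p : ℤ × ℤ => X p ω) μ

/-- A random field `X` is `m`-dependent if any two subfamilies whose index sets are separated
by a (sup-)distance greater than `m` are independent. -/
def IsMDependent {Ω : Type*} [MeasurableSpace Ω] (μ : Measure Ω)
    (X : ℤ × ℤ → Ω → ℝ) (m : ℕ) : Prop :=
  ∀ A B : Set (ℤ × ℤ),
    (∀ p ∈ A, ∀ q ∈ B, (m : ℤ) < max |p.1 - q.1| |p.2 - q.2|) →
    IndepFun (fun ω => fun p : A => X p.1 ω) (fun ω => fun q : B => X q.1 ω) μ

/-- A positive function is slowly varying if `L (c x) / L x → 1` as `x → ∞` for every `c > 0`. -/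
def SlowlyVarying (L : ℝ → ℝ) : Prop :=
  (∀ x : ℝ, 0 < x → 0 < L x) ∧
    ∀ c : ℝ, 0 < c → Tendsto (fun x => L (c * x) / L x) atTop (nhds 1)

/-- The field is regularly varying with index `α`: `ℙ(|X₀₀| > x) = x^(-α) L(x)`
for a slowly varying `L`. -/
def IsRegVarying {Ω : Type*} [MeasurableSpace Ω] (μ : Measure Ω)
    (X : ℤ × ℤ → Ω → ℝ) (α : ℝ) : Prop :=
  ∃ L : ℝ → ℝ, SlowlyVarying L ∧
    ∀ x : ℝ, 0 < x → (μ {ω | x < |X (0, 0) ω|}).toReal = x ^ (-α) * L x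

/-- The symmetrized field `X̂`. -/
def symX {Ω : Type*} (X : ℤ × ℤ → Ω → ℝ) (i j : ℤ) (ω : Ω) : ℝ :=
  if i ≤ j then X (i, j) ω else X (j, i) ω

/-- `(a_n)` is a normalizing sequence: `a_n → ∞` and `n ℙ(|X₀₀| > a_n) → 1`. -/
def IsNormSeq {Ω : Type*} [MeasurableSpace Ω] (μ : Measure Ω)
    (X : ℤ × ℤ → Ω → ℝ) (a : ℕ → ℝ) : Prop :=
  Tendsto a atTop atTop ∧
    Tendsto (fun n : ℕ => (n : ℝ) * (μ {ω | a n < |X (0, 0) ω|}).toReal) atTop (nhds 1)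

/-- The Wigner matrix `Â_n = (X̂_{ij} / b)_{1 ≤ i,j ≤ n}`. -/
def wignerMat {Ω : Type*} (X : ℤ × ℤ → Ω → ℝ) (b : ℝ) (n : ℕ) (ω : Ω) :
    Matrix (Fin n) (Fin n) ℝ :=
  Matrix.of fun i j => symX X ((i : ℕ) + 1 : ℤ) ((j : ℕ) + 1 : ℤ) ω / b

/-- The `p × n` data matrix `A = (X_{ij} / c)_{1 ≤ i ≤ p, 1 ≤ j ≤ n}`. -/
def dataMat {Ω : Type*} (X : ℤ × ℤ → Ω → ℝ) (c : ℝ) (p n : ℕ) (ω : Ω) :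
    Matrix (Fin p) (Fin n) ℝ :=
  Matrix.of fun i j => X (((i : ℕ) + 1 : ℤ), ((j : ℕ) + 1 : ℤ)) ω / c

/-- Entrywise truncation keeping the entries of absolute value `> t` : `M^{>t}`. -/
def truncGt {p q : ℕ} (M : Matrix (Fin p) (Fin q) ℝ) (t : ℝ) : Matrix (Fin p) (Fin q) ℝ :=
  Matrix.of fun i j => if t < |M i j| then M i j else 0

/-- `M^{<t} := M - M^{>t}`, i.e. the entries of absolute value `≤ t`. -/
def truncLe {p q : ℕ} (M : Matrix (Fin p) (Fin q) ℝ) (t : ℝ) : Matrix (Fin p) (Fin q) ℝ :=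
  M - truncGt M t

/-- The spectral norm (largest singular value) of a rectangular real matrix, realized as the
operator norm of the induced map between Euclidean spaces. -/
def specNorm {p q : ℕ} (M : Matrix (Fin p) (Fin q) ℝ) : ℝ :=
  ‖LinearMap.toContinuousLinearMap (Matrix.toEuclideanLin M)‖

/-- The event that the `(k,l)` block (of size `r × r`, `1`-based block indices) of the
matrix `(X̂_{ij}/b)` has max-norm `> ε`. -/
def blockExceed {Ω : Type*} (X : ℤ × ℤ → Ω → ℝ) (b : ℝ) (r k l : ℕ) (ε : ℝ) (ω : Ω) : Prop :=
  ∃ i ∈ Finset.Ioc ((k - 1) * r) (k * r), ∃ j ∈ Finset.Ioc ((l - 1) * r) (l * r),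
    ε < |symX X (i : ℤ) (j : ℤ) ω / b|

/-- `r_n = n^(1-η)` (as a natural number, via the floor). -/
def rseq (η : ℝ) (n : ℕ) : ℕ := ⌊(n : ℝ) ^ (1 - η)⌋₊

/-- `k_n = n^η` (as a natural number, via the floor). -/
def kseq (η : ℝ) (n : ℕ) : ℕ := ⌊(n : ℝ) ^ η⌋₊

/-- The set of `n` for which `n^(1-η)` and `n^η` are integers. -/
def goodSet (η : ℝ) : Set ℕ :=
  {n | ((rseq η n : ℝ) = (n : ℝ) ^ (1 - η)) ∧ ((kseq η n : ℝ) = (n : ℝ) ^ η)}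

/-- `lam` is an eigenvalue of the real matrix `M`. -/
def IsEigenvalue {n : Type*} [Fintype n] (M : Matrix n n ℝ) (lam : ℝ) : Prop :=
  ∃ v : n → ℝ, v ≠ 0 ∧ M.mulVec v = lam • v

/-- The multiset of singular values of a rectangular real matrix: the square roots of the
eigenvalues of `Mᵀ M` (`= Mᴴ M` over `ℝ`), with multiplicity. -/
def singularValues {p q : ℕ} (M : Matrix (Fin p) (Fin q) ℝ) : Multiset ℝ :=
  Finset.univ.val.map fun i =>
    Real.sqrt ((show (Mᵀ * M).IsHermitian by
      simpa using Matrix.isHermitian_conjTranspose_mul_self M).eigenvalues i)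

/-- The eigenvalues of a real symmetric matrix, sorted increasingly (as a list);
junk value for non-symmetric matrices. -/
def sortedEigs {N : ℕ} (M : Matrix (Fin N) (Fin N) ℝ) : List ℝ :=
  if h : M.IsHermitian then (Finset.univ.val.map h.eigenvalues).sort (· ≤ ·)
  else List.replicate N 0

/-- The index of row `i` of block-row `a` inside a `(k*r) × (k*r)` matrix partitioned
into `r × r` blocks. -/
def blkIdx {k r : ℕ} (a : Fin k) (i : Fin r) : Fin (k * r) :=
  ⟨a.1 * r + i.1, by
    have hi := i.2
    have ha := a.2
    have h1 : a.1 * r + i.1 < (a.1 + 1) * r := by nlinarith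
    have h2 : (a.1 + 1) * r ≤ k * r := by nlinarith
    exact lt_of_lt_of_le h1 h2⟩

/-- The `(a,b)` block (of size `r × r`) of a `(k*r) × (k*r)` matrix. -/
def blockOf {k r : ℕ} (H : Matrix (Fin (k * r)) (Fin (k * r)) ℝ) (a b : Fin k) :
    Matrix (Fin r) (Fin r) ℝ :=
  Matrix.of fun i j => H (blkIdx a i) (blkIdx b j)

/-- The `n × n` matrix with entries `X̂_{ij} 1{|X̂_{ij}| < t}` (not yet normalized). -/
def truncSymMat {Ω : Type*} (X : ℤ × ℤ → Ω → ℝ) (n : ℕ) (t : ℝ) (ω : Ω) :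
    Matrix (Fin n) (Fin n) ℝ :=
  Matrix.of fun i j =>
    if |symX X ((i : ℕ) + 1 : ℤ) ((j : ℕ) + 1 : ℤ) ω| < t
    then symX X ((i : ℕ) + 1 : ℤ) ((j : ℕ) + 1 : ℤ) ω else 0

-- ========== probabilistic auxiliary lemmas (use problem definitions) ==========
section StmtSevenProbAux
set_option linter.unusedSectionVars false
open scoped ENNReal

lemma symX_min_max {Ω : Type*} (X : ℤ × ℤ → Ω → ℝ) (i j : ℤ) (ω : Ω) :
    symX X i j ω = X (min i j, max i j) ω := by
  unfold symX
  rcases le_total i j with h | h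
  · rw [if_pos h, min_eq_left h, max_eq_right h]
  · rcases eq_or_lt_of_le h with rfl | h'
    · simp
    · rw [if_neg (by omega), min_eq_right h, max_eq_left h]

def ptN (p q : ℕ) : ℤ × ℤ := (((min p q : ℕ) : ℤ), ((max p q : ℕ) : ℤ))

lemma far_sep {m : ℕ} {e : (ℕ×ℕ)×(ℕ×ℕ)} (hA : ¬ closeAN m e) (hB : ¬ closeBN m e) :
    (m : ℤ) < max |(ptN e.1.1 e.1.2).1 - (ptN e.2.1 e.2.2).1|
      |(ptN e.1.1 e.1.2).2 - (ptN e.2.1 e.2.2).2| := by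
  obtain ⟨⟨p, q⟩, ⟨p', q'⟩⟩ := e
  unfold closeAN at hA
  unfold closeBN at hB
  simp only [ptN, Nat.cast_min, Nat.cast_max] at *
  rcases le_total (p:ℤ) q with h1 | h1 <;> rcases le_total (p':ℤ) q' with h2 | h2 <;>
    simp only [min_eq_left h1, max_eq_right h1, min_eq_right h1, max_eq_left h1,
      min_eq_left h2, max_eq_right h2, min_eq_right h2, max_eq_left h2] <;>
    simp only [lt_max_iff, lt_abs] <;> omega

lemma exceed_iff {Ω : Type*} (X : ℤ × ℤ → Ω → ℝ) {b : ℝ} (hb : 0 < b) (ε : ℝ)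
    (p q : ℕ) (ω : Ω) : ε < |symX X (p : ℤ) (q : ℤ) ω / b| ↔ ε * b < |X (ptN p q) ω| := by
  rw [abs_div, abs_of_pos hb, lt_div_iff₀ hb, symX_min_max]
  rw [show ptN p q = (min (p:ℤ) (q:ℤ), max (p:ℤ) (q:ℤ)) by
    simp only [ptN, Nat.cast_min, Nat.cast_max]]

variable {Ω : Type*} [MeasurableSpace Ω] (μ : Measure Ω) [IsProbabilityMeasure μ]
  (X : ℤ × ℤ → Ω → ℝ)

lemma tail_shift (hmeas : ∀ p, Measurable (X p)) (hstat : IsStationaryField μ X)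
    (s : ℤ × ℤ) (t : ℝ) :
    μ {ω | t < |X s ω|} = μ {ω | t < |X (0, 0) ω|} := by
  have h := hstat s.1 s.2
  have hF : Measurable (fun ω => fun p : ℤ × ℤ => X (p.1 + s.1, p.2 + s.2) ω) :=
    measurable_pi_lambda _ (fun p => hmeas _)
  have hG : Measurable (fun ω => fun p : ℤ × ℤ => X p ω) :=
    measurable_pi_lambda _ (fun p => hmeas _)
  have hset : MeasurableSet {f : ℤ × ℤ → ℝ | t < |f (0, 0)|} := by
    apply measurableSet_lt measurable_const
    exact (continuous_abs.measurable).comp (measurable_pi_apply _)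
  have h1 := congrArg (fun ν => ν {f : ℤ × ℤ → ℝ | t < |f (0, 0)|}) h
  rw [Measure.map_apply hF hset, Measure.map_apply hG hset] at h1
  convert h1 using 2
  ext ω
  simp only [Set.mem_setOf_eq, Set.mem_preimage, zero_add]
  rfl

lemma indep_tail {m : ℕ} (hdep : IsMDependent μ X m) (s₁ s₂ : ℤ × ℤ)
    (hfar : (m : ℤ) < max |s₁.1 - s₂.1| |s₁.2 - s₂.2|) (t : ℝ) :
    μ ({ω | t < |X s₁ ω|} ∩ {ω | t < |X s₂ ω|}) = μ {ω | t < |X s₁ ω|} * μ {ω | t < |X s₂ ω|} := by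
  have h := hdep {s₁} {s₂} (by
    intro p hp q hq
    simp only [Set.mem_singleton_iff] at hp hq
    subst hp; subst hq; exact hfar)
  have h2 : IndepFun (X s₁) (X s₂) μ := by
    have := h.comp (φ := fun f : ({s₁} : Set (ℤ×ℤ)) → ℝ => f ⟨s₁, rfl⟩)
      (ψ := fun f : ({s₂} : Set (ℤ×ℤ)) → ℝ => f ⟨s₂, rfl⟩)
      (measurable_pi_apply (⟨s₁, rfl⟩ : ({s₁} : Set (ℤ×ℤ))) :
        Measurable fun f : ({s₁} : Set (ℤ×ℤ)) → ℝ => f ⟨s₁, rfl⟩)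
      (measurable_pi_apply (⟨s₂, rfl⟩ : ({s₂} : Set (ℤ×ℤ))) :
        Measurable fun f : ({s₂} : Set (ℤ×ℤ)) → ℝ => f ⟨s₂, rfl⟩)
    exact this
  have hset : MeasurableSet {y : ℝ | t < |y|} :=
    measurableSet_lt measurable_const continuous_abs.measurable
  exact h2.measure_inter_preimage_eq_mul {y | t < |y|} {y | t < |y|} hset hset

/-- the pair event -/
def pairEv (X : ℤ × ℤ → Ω → ℝ) (t : ℝ) (e : (ℕ×ℕ)×(ℕ×ℕ)) : Set Ω :=
  {ω | t < |X (ptN e.1.1 e.1.2) ω|} ∩ {ω | t < |X (ptN e.2.1 e.2.2) ω|}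

lemma offdiag_bound (hmeas : ∀ p, Measurable (X p)) {m : ℕ}
    (hstat : IsStationaryField μ X) (hdep : IsMDependent μ X m)
    (k r : ℕ) (hm : m < r) (b ε : ℝ) (hb : 0 < b) :
    μ {ω | ∃ i ∈ Finset.Icc 1 k, ∃ j ∈ Finset.Icc 1 k, ∃ l ∈ Finset.Icc 1 k, j ≠ l ∧
        blockExceed X b r i j ε ω ∧ blockExceed X b r i l ε ω}
      ≤ (k*k*k*(r*r*r*r) : ℕ) * (μ {ω | ε*b < |X (0,0) ω|}) * (μ {ω | ε*b < |X (0,0) ω|})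
        + ((k * (r*(2*m+1)) * (k * (2*(m*(2*m+1)))) + k * ((3*(r*(2*m+1))) * (3*(r*(2*m+1))))) : ℕ)
          * μ {ω | ε*b < |X (0,0) ω|} := by
  set t : ℝ := ε * b with ht
  set p : ℝ≥0∞ := μ {ω | t < |X (0,0) ω|} with hp
  set F : ℕ → ℕ → ℕ → Finset ((ℕ×ℕ)×(ℕ×ℕ)) :=
    fun i j l => if j = l then ∅ else quadSet r i j l with hF
  have hsub : {ω | ∃ i ∈ Finset.Icc 1 k, ∃ j ∈ Finset.Icc 1 k, ∃ l ∈ Finset.Icc 1 k, j ≠ l ∧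
      blockExceed X b r i j ε ω ∧ blockExceed X b r i l ε ω} ⊆
      ⋃ i ∈ Finset.Icc 1 k, ⋃ j ∈ Finset.Icc 1 k, ⋃ l ∈ Finset.Icc 1 k,
        ⋃ e ∈ F i j l, pairEv X t e := by
    rintro ω ⟨i, hi, j, hj, l, hl, hjl, ⟨pp, hpp, qq, hqq, h1⟩, ⟨pp', hpp', qq', hqq', h2⟩⟩
    simp only [Set.mem_iUnion]
    refine ⟨i, hi, j, hj, l, hl, ((pp,qq),(pp',qq')), ?_, ?_⟩
    · rw [hF]; simp only [if_neg hjl]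
      simp only [quadSet, Finset.mem_product, blkN]
      exact ⟨⟨hpp, hqq⟩, hpp', hqq'⟩
    · exact ⟨(exceed_iff X hb ε pp qq ω).1 h1, (exceed_iff X hb ε pp' qq' ω).1 h2⟩
  have hpair_le : ∀ e : (ℕ×ℕ)×(ℕ×ℕ), μ (pairEv X t e) ≤ p := by
    intro e
    refine (measure_mono Set.inter_subset_left).trans ?_
    rw [tail_shift μ X hmeas hstat]
  have hpair_far : ∀ e : (ℕ×ℕ)×(ℕ×ℕ), ¬ (closeAN m e ∨ closeBN m e) →
      μ (pairEv X t e) = p * p := by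
    intro e he
    push_neg at he
    rw [pairEv, indep_tail μ X hdep _ _ (far_sep he.1 he.2) t,
      tail_shift μ X hmeas hstat (ptN e.1.1 e.1.2) t,
      tail_shift μ X hmeas hstat (ptN e.2.1 e.2.2) t]
  have hinner : ∀ i ∈ Finset.Icc 1 k, ∀ j ∈ Finset.Icc 1 k, ∀ l ∈ Finset.Icc 1 k,
      μ (⋃ e ∈ F i j l, pairEv X t e) ≤
        ((if j = l then 0
          else ((quadSet r i j l).filter (fun e => closeAN m e ∨ closeBN m e)).card : ℕ)) * p
        + ((r*r*r*r : ℕ) : ℝ≥0∞) * (p * p) := by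
    intro i hi j hj l hl
    refine (measure_biUnion_finset_le _ _).trans ?_
    rw [← Finset.sum_filter_add_sum_filter_not (F i j l) (fun e => closeAN m e ∨ closeBN m e)]
    have h1 : ∑ e ∈ (F i j l).filter (fun e => closeAN m e ∨ closeBN m e), μ (pairEv X t e)
        ≤ ((if j = l then 0
          else ((quadSet r i j l).filter (fun e => closeAN m e ∨ closeBN m e)).card : ℕ)) * p := by
      refine (Finset.sum_le_card_nsmul _ _ p (fun e _ => hpair_le e)).trans ?_
      rw [nsmul_eq_mul]
      apply mul_le_mul_left
      rw [hF]
      rcases eq_or_ne j l with rfl | hne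
      · simp
      · simp only [if_neg hne]
        exact_mod_cast le_rfl
    have h2 : ∑ e ∈ (F i j l).filter (fun e => ¬ (closeAN m e ∨ closeBN m e)), μ (pairEv X t e)
        ≤ ((r*r*r*r : ℕ) : ℝ≥0∞) * (p * p) := by
      refine (Finset.sum_le_card_nsmul _ _ (p * p) ?_).trans ?_
      · intro e he
        rw [hpair_far e (Finset.mem_filter.1 he).2]
      · rw [nsmul_eq_mul]
        apply mul_le_mul_left
        have hcard : ((F i j l).filter (fun e => ¬ (closeAN m e ∨ closeBN m e))).card
            ≤ r*r*r*r := by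
          refine (Finset.card_filter_le _ _).trans ?_
          rw [hF]
          rcases eq_or_ne j l with rfl | hne
          · simp
          · simp only [if_neg hne, quadSet]
            rw [Finset.card_product, Finset.card_product, Finset.card_product,
              card_blkN r i (Finset.mem_Icc.1 hi).1, card_blkN r j (Finset.mem_Icc.1 hj).1,
              card_blkN r l (Finset.mem_Icc.1 hl).1]
            ring_nf
            exact le_rfl
        exact_mod_cast hcard
    exact add_le_add h1 h2
  calc μ _ ≤ μ (⋃ i ∈ Finset.Icc 1 k, ⋃ j ∈ Finset.Icc 1 k, ⋃ l ∈ Finset.Icc 1 k,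
        ⋃ e ∈ F i j l, pairEv X t e) := measure_mono hsub
    _ ≤ ∑ i ∈ Finset.Icc 1 k, μ (⋃ j ∈ Finset.Icc 1 k, ⋃ l ∈ Finset.Icc 1 k,
        ⋃ e ∈ F i j l, pairEv X t e) := measure_biUnion_finset_le _ _
    _ ≤ ∑ i ∈ Finset.Icc 1 k, ∑ j ∈ Finset.Icc 1 k, μ (⋃ l ∈ Finset.Icc 1 k,
        ⋃ e ∈ F i j l, pairEv X t e) :=
        Finset.sum_le_sum (fun i _ => measure_biUnion_finset_le _ _)
    _ ≤ ∑ i ∈ Finset.Icc 1 k, ∑ j ∈ Finset.Icc 1 k, ∑ l ∈ Finset.Icc 1 k,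
        μ (⋃ e ∈ F i j l, pairEv X t e) :=
        Finset.sum_le_sum (fun i _ => Finset.sum_le_sum (fun j _ => measure_biUnion_finset_le _ _))
    _ ≤ ∑ i ∈ Finset.Icc 1 k, ∑ j ∈ Finset.Icc 1 k, ∑ l ∈ Finset.Icc 1 k,
        (((if j = l then 0
          else ((quadSet r i j l).filter (fun e => closeAN m e ∨ closeBN m e)).card : ℕ)) * p
          + ((r*r*r*r : ℕ) : ℝ≥0∞) * (p * p)) :=
        Finset.sum_le_sum (fun i hi => Finset.sum_le_sum (fun j hj =>
          Finset.sum_le_sum (fun l hl => hinner i hi j hj l hl)))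
    _ ≤ _ := by
        have hfin : ∑ i ∈ Finset.Icc 1 k, ∑ j ∈ Finset.Icc 1 k, ∑ l ∈ Finset.Icc 1 k,
            ((((if j = l then 0
              else ((quadSet r i j l).filter (fun e => closeAN m e ∨ closeBN m e)).card) : ℕ) : ℝ≥0∞) * p
              + ((r*r*r*r : ℕ) : ℝ≥0∞) * (p * p))
            = (((∑ i ∈ Finset.Icc 1 k, ∑ j ∈ Finset.Icc 1 k, ∑ l ∈ Finset.Icc 1 k,
                (if j = l then 0
                  else ((quadSet r i j l).filter (fun e => closeAN m e ∨ closeBN m e)).card) : ℕ) : ℝ≥0∞)) * p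
              + ((k*k*k*(r*r*r*r) : ℕ) : ℝ≥0∞) * (p * p) := by
          simp only [Finset.sum_add_distrib, ← Finset.sum_mul, Finset.sum_const,
            Nat.card_Icc, Nat.add_sub_cancel, smul_eq_mul]
          push_cast
          ring
        rw [hfin, add_comm]
        apply add_le_add
        · exact le_of_eq (by ring)
        · apply mul_le_mul_left
          exact_mod_cast total_close_le k r m hm

lemma diag_bound (hmeas : ∀ p, Measurable (X p)) (hstat : IsStationaryField μ X)
    (k r : ℕ) (b ε : ℝ) (hb : 0 < b) :
    μ {ω | ∃ i ∈ Finset.Icc 1 k, blockExceed X b r i i ε ω}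
      ≤ ((k*(r*r) : ℕ) : ℝ≥0∞) * μ {ω | ε*b < |X (0,0) ω|} := by
  set t : ℝ := ε * b with ht
  set p : ℝ≥0∞ := μ {ω | t < |X (0,0) ω|} with hp
  have hsub : {ω | ∃ i ∈ Finset.Icc 1 k, blockExceed X b r i i ε ω} ⊆
      ⋃ i ∈ Finset.Icc 1 k, ⋃ e ∈ (blkN r i ×ˢ blkN r i),
        {ω | t < |X (ptN e.1 e.2) ω|} := by
    rintro ω ⟨i, hi, pp, hpp, qq, hqq, h1⟩
    simp only [Set.mem_iUnion]
    refine ⟨i, hi, (pp, qq), ?_, (exceed_iff X hb ε pp qq ω).1 h1⟩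
    simp only [Finset.mem_product, blkN]
    exact ⟨hpp, hqq⟩
  calc μ _ ≤ μ (⋃ i ∈ Finset.Icc 1 k, ⋃ e ∈ (blkN r i ×ˢ blkN r i),
        {ω | t < |X (ptN e.1 e.2) ω|}) := measure_mono hsub
    _ ≤ ∑ i ∈ Finset.Icc 1 k, μ (⋃ e ∈ (blkN r i ×ˢ blkN r i),
        {ω | t < |X (ptN e.1 e.2) ω|}) := measure_biUnion_finset_le _ _
    _ ≤ ∑ i ∈ Finset.Icc 1 k, ∑ e ∈ (blkN r i ×ˢ blkN r i),
        μ {ω | t < |X (ptN e.1 e.2) ω|} :=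
        Finset.sum_le_sum (fun i _ => measure_biUnion_finset_le _ _)
    _ ≤ ∑ i ∈ Finset.Icc 1 k, ((r*r : ℕ) : ℝ≥0∞) * p := by
        apply Finset.sum_le_sum
        intro i hi
        refine (Finset.sum_le_card_nsmul _ _ p ?_).trans ?_
        · intro e _
          rw [tail_shift μ X hmeas hstat]
        · rw [nsmul_eq_mul]
          apply mul_le_mul_left
          rw [Finset.card_product, card_blkN r i (Finset.mem_Icc.1 hi).1]
    _ ≤ _ := by
        rw [Finset.sum_const, Nat.card_Icc, Nat.add_sub_cancel, nsmul_eq_mul]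
        apply le_of_eq
        push_cast
        ring

end StmtSevenProbAux
-- ========== end probabilistic auxiliary ==========

open scoped ENNReal

set_option maxHeartbeats 1000000

/-- Lemma 4.8 of the paper: with the second truncation level
`ε̃_n = b_n^{(κ-1)/2}`, with probability tending to 1 (along the `n` for which
`n^{1-η}` and `n^η` are integers) there is at most one `ε̃_n`-exceeding block in each
row of blocks, and none on the diagonal. -/



theorem stmt7 {Ω : Type*} [MeasurableSpace Ω] (μ : Measure Ω) [IsProbabilityMeasure μ]
    (X : ℤ × ℤ → Ω → ℝ) (hmeas : ∀ p, Measurable (X p))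
    (m : ℕ) (hstat : IsStationaryField μ X) (hdep : IsMDependent μ X m)
    (α : ℝ) (hα1 : 2 ≤ α) (hα2 : α < 4) (hreg : IsRegVarying μ X α)
    (a : ℕ → ℝ) (ha : IsNormSeq μ X a)
    (β η κ : ℝ)
    (hβ1 : 4 / (3 * α) < β) (hβ2 : β < 2 * (8 - α) / (α * (10 - α)))
    (hη1 : 2 / 3 < η) (hη2 : η < 1) (hη3 : α * β - 1 < η) (hκ : η < κ) :
    Tendsto
      (fun n : ℕ => μ {ω | ∃ i ∈ Finset.Icc 1 (kseq η n), ∃ j ∈ Finset.Icc 1 (kseq η n),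
          ∃ l ∈ Finset.Icc 1 (kseq η n), j ≠ l ∧
          blockExceed X (a (n ^ 2)) (rseq η n) i j ((a (n ^ 2)) ^ ((κ - 1) / 2)) ω ∧
          blockExceed X (a (n ^ 2)) (rseq η n) i l ((a (n ^ 2)) ^ ((κ - 1) / 2)) ω})
      (atTop ⊓ Filter.principal (goodSet η)) (nhds 0) ∧
    Tendsto
      (fun n : ℕ => μ {ω | ∃ i ∈ Finset.Icc 1 (kseq η n),
          blockExceed X (a (n ^ 2)) (rseq η n) i i ((a (n ^ 2)) ^ ((κ - 1) / 2)) ω})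
      (atTop ⊓ Filter.principal (goodSet η)) (nhds 0) := by
  classical
  obtain ⟨L, hL, hregL⟩ := hreg
  have hα0 : (0:ℝ) < α := by linarith
  have hη0 : (0:ℝ) < η := by linarith
  -- exponents
  set g₀ : ℝ := max (1+η) (2-η/2) with hg₀def
  have hg₀1 : 1 + η ≤ g₀ := le_max_left _ _
  have hg₀2 : 2 - η/2 ≤ g₀ := le_max_right _ _
  have hg₀pos : (0:ℝ) < g₀ := by linarith
  have hg₀lt : g₀ < κ + 1 := by
    apply max_lt <;> linarith
  have hden : (0:ℝ) < 2*(κ+1+g₀) := by linarith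
  set s : ℝ := α*(κ+1-g₀)/(2*(κ+1+g₀)) with hsdef
  have hs0 : 0 < s := div_pos (by nlinarith) hden
  have hs_eq : s * (2*(κ+1+g₀)) = α*(κ+1-g₀) := div_mul_cancel₀ _ (ne_of_gt hden)
  have hsα : s < α := by
    rw [hsdef, div_lt_iff₀ hden]; nlinarith
  have hθ0 : 0 < α - s := by linarith
  have hθ'0 : 0 < α + s := by linarith
  set γ : ℝ := (α-s)*(κ+1)/(α+s) with hγdef
  have hγg : g₀ < γ := by
    rw [hγdef, lt_div_iff₀ hθ'0]
    nlinarith [mul_pos hs0 (show (0:ℝ) < κ+1+g₀ by linarith)]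
  have hγ1 : 2 - η/2 < γ := lt_of_le_of_lt hg₀2 hγg
  have hγ2 : 1 + η < γ := lt_of_le_of_lt hg₀1 hγg
  have hγ3 : 2 - η < γ := by linarith
  have hγ0 : 0 < γ := by linarith
  set δ1 : ℝ := 2*γ - (4-η) with hδ1def
  set δ2 : ℝ := γ - (1+η) with hδ2def
  set δ3 : ℝ := γ - (2-η) with hδ3def
  have hδ1pos : 0 < δ1 := by rw [hδ1def]; linarith
  have hδ2pos : 0 < δ2 := by rw [hδ2def]; linarith
  have hδ3pos : 0 < δ3 := by rw [hδ3def]; linarith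
  -- the tail function
  set T : ℝ → ℝ := fun x => (μ {ω | x < |X (0,0) ω|}).toReal with hTdef
  have hregT : ∀ x : ℝ, 0 < x → T x = x ^ (-α) * L x := hregL
  have hTmono : Antitone T := by
    intro x y hxy
    apply ENNReal.toReal_mono (measure_ne_top μ _)
    apply measure_mono
    intro ω hω
    exact lt_of_le_of_lt hxy hω
  have hTpos : ∀ x, 0 < x → 0 < T x := by
    intro x hx
    rw [hregT x hx]
    exact mul_pos (Real.rpow_pos_of_pos hx _) (hL.1 x hx)
  have hTlim : Tendsto (fun x => T (2*x) / T x) atTop (nhds ((2:ℝ)^(-α))) := by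
    have h1 : ∀ᶠ x in atTop, (2:ℝ)^(-α) * (L (2*x)/L x) = T (2*x)/T x := by
      filter_upwards [eventually_gt_atTop (0:ℝ)] with x hx
      rw [hregT x hx, hregT (2*x) (by linarith)]
      rw [Real.mul_rpow (by norm_num) hx.le]
      have h2 : (x:ℝ)^(-α) ≠ 0 := ne_of_gt (Real.rpow_pos_of_pos hx _)
      have h3 : L x ≠ 0 := ne_of_gt (hL.1 x hx)
      field_simp
    apply Tendsto.congr' h1
    have := (hL.2 2 (by norm_num)).const_mul ((2:ℝ)^(-α))
    simpa using this
  obtain ⟨C, hC0, x₀u, hx₀u1, hup⟩ :=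
    stmt7_tail_upper T hTmono hTpos α (α-s) hθ0 (by linarith) hTlim
  obtain ⟨c, hc0, x₀l, hx₀l1, hlo⟩ :=
    stmt7_tail_lower T hTmono hTpos α (α+s) hθ'0 (by linarith) hTlim
  set b : ℕ → ℝ := fun n => a (n^2) with hbdef
  set c₁ : ℝ := (c/2)^(1/(α+s)) with hc₁def
  have hc₁0 : 0 < c₁ := Real.rpow_pos_of_pos (by linarith) _
  set ee : ℝ := (α-s)*(κ+1)/2 with heedef
  have hee0 : 0 < ee := by
    rw [heedef]
    apply div_pos (mul_pos hθ0 (by linarith)) (by norm_num)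
  set C₂ : ℝ := C * c₁^(-ee) with hC₂def
  have hC₂0 : 0 < C₂ := mul_pos hC0 (Real.rpow_pos_of_pos hc₁0 _)
  have hsq : Tendsto (fun n : ℕ => n^2) atTop atTop :=
    tendsto_atTop_mono (fun n => Nat.le_self_pow two_ne_zero n) tendsto_id
  have hbtop : Tendsto b atTop atTop := ha.1.comp hsq
  have hnT : Tendsto (fun n : ℕ => (n:ℝ)^2 * T (b n)) atTop (nhds 1) := by
    have h0 := ha.2.comp hsq
    apply h0.congr
    intro n
    simp only [Function.comp_apply]
    push_cast
    rfl
  -- eventual facts along atTop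
  have hev2 : ∀ᶠ n : ℕ in atTop, (n:ℝ)^2 * T (b n) < 2 := hnT.eventually_lt_const (by norm_num)
  have hev3 : ∀ᶠ n : ℕ in atTop, x₀u ≤ (b n)^((κ+1)/2) := by
    have h1 : Tendsto (fun n : ℕ => (b n)^((κ+1)/2)) atTop atTop :=
      (tendsto_rpow_atTop (by linarith : (0:ℝ) < (κ+1)/2)).comp hbtop
    exact h1.eventually_ge_atTop x₀u
  have hev4 : ∀ᶠ n : ℕ in atTop, (m:ℝ) < (n:ℝ)^(1-η) := by
    have h1 : Tendsto (fun n : ℕ => ((n:ℝ))^(1-η)) atTop atTop :=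
      (tendsto_rpow_atTop (by linarith : (0:ℝ) < 1-η)).comp tendsto_natCast_atTop_atTop
    exact h1.eventually_gt_atTop m
  have hkey : ∀ᶠ n : ℕ in atTop,
      T ((b n)^((κ+1)/2)) ≤ C₂ * (n:ℝ)^(-γ) ∧ 0 < b n ∧ (m:ℝ) < (n:ℝ)^(1-η) ∧ 1 ≤ n := by
    filter_upwards [hbtop.eventually_ge_atTop (max 1 x₀l), hev2, hev3, hev4,
      eventually_ge_atTop 1] with n hbge hT2 htu hm4 hn1
    have hbn0 : (0:ℝ) < b n := lt_of_lt_of_le one_pos ((le_max_left _ _).trans hbge)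
    refine ⟨?_, hbn0, hm4, hn1⟩
    have hn0 : (0:ℝ) < (n:ℝ) := by exact_mod_cast hn1
    have h1 : c * (b n)^(-(α+s)) ≤ T (b n) := hlo _ ((le_max_right _ _).trans hbge)
    have hT2' : T (b n) ≤ 2 / (n:ℝ)^2 := by
      rw [le_div_iff₀ (by positivity)]
      calc T (b n) * (n:ℝ)^2 = (n:ℝ)^2 * T (b n) := by ring
        _ ≤ 2 := le_of_lt hT2
    have hbθ : (0:ℝ) < (b n)^(α+s) := Real.rpow_pos_of_pos hbn0 _
    have h3 : c / (b n)^(α+s) ≤ 2 / (n:ℝ)^2 := by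
      rw [Real.rpow_neg hbn0.le, ← div_eq_mul_inv] at h1
      exact h1.trans hT2'
    rw [div_le_div_iff₀ hbθ (by positivity)] at h3
    have hblow : c₁ * (n:ℝ)^(2/(α+s)) ≤ b n := by
      rw [← Real.rpow_le_rpow_iff (by positivity) hbn0.le hθ'0,
        Real.mul_rpow hc₁0.le (by positivity), hc₁def]
      rw [← Real.rpow_mul (by linarith : (0:ℝ) ≤ c/2),
        one_div_mul_cancel (ne_of_gt hθ'0), Real.rpow_one,
        ← Real.rpow_mul hn0.le, div_mul_cancel₀ _ (ne_of_gt hθ'0)]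
      have hn2 : (n:ℝ)^(2:ℝ) = (n:ℝ)^(2:ℕ) := by
        rw [← Real.rpow_natCast (n:ℝ) 2]; norm_num
      rw [hn2, div_mul_eq_mul_div, div_le_iff₀ (by norm_num : (0:ℝ) < 2)]
      exact h3.trans (le_of_eq (mul_comm _ _))
    -- now the tail bound at the truncation level
    have h4 : T ((b n)^((κ+1)/2)) ≤ C * ((b n)^((κ+1)/2))^(-(α-s)) := hup _ htu
    have h5 : ((b n)^((κ+1)/2))^(-(α-s)) = (b n)^(-ee) := by
      rw [← Real.rpow_mul hbn0.le, heedef]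
      congr 1
      ring
    have h6 : (b n)^(-ee) ≤ (c₁ * (n:ℝ)^(2/(α+s)))^(-ee) :=
      Real.rpow_le_rpow_of_nonpos (by positivity) hblow (by linarith)
    have h7 : (c₁ * (n:ℝ)^(2/(α+s)))^(-ee) = c₁^(-ee) * (n:ℝ)^(-γ) := by
      rw [Real.mul_rpow hc₁0.le (by positivity), ← Real.rpow_mul hn0.le]
      have hexp : (2/(α+s)) * -ee = -γ := by
        rw [hγdef, heedef]
        field_simp
      rw [hexp]
    calc T ((b n)^((κ+1)/2)) ≤ C * (b n)^(-ee) := by rw [← h5]; exact h4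
      _ ≤ C * (c₁^(-ee) * (n:ℝ)^(-γ)) := by
          apply mul_le_mul_of_nonneg_left _ hC0.le
          rw [← h7]
          exact h6
      _ = C₂ * (n:ℝ)^(-γ) := by rw [hC₂def]; ring
  -- bound functions tend to zero
  have hterm : ∀ (K δ : ℝ), 0 < δ → Tendsto (fun n : ℕ => K * (n:ℝ)^(-δ)) atTop (nhds 0) := by
    intro K δ hδ
    have := (tendsto_rpow_neg_atTop hδ).comp tendsto_natCast_atTop_atTop
    simpa using this.const_mul K
  have hlim1 : Tendsto (fun n : ℕ => ENNReal.ofReal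
      ((C₂*C₂) * (n:ℝ)^(-δ1) + (2*(m:ℝ)*(2*(m:ℝ)+1)^2*C₂) * (n:ℝ)^(-δ2)
        + (9*(2*(m:ℝ)+1)^2*C₂) * (n:ℝ)^(-δ3))) atTop (nhds 0) := by
    have hr := ((hterm (C₂*C₂) δ1 hδ1pos).add
      (hterm (2*(m:ℝ)*(2*(m:ℝ)+1)^2*C₂) δ2 hδ2pos)).add
      (hterm (9*(2*(m:ℝ)+1)^2*C₂) δ3 hδ3pos)
    simp only [add_zero] at hr
    have := ENNReal.tendsto_ofReal hr
    simpa using this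
  have hlim2 : Tendsto (fun n : ℕ => ENNReal.ofReal (C₂ * (n:ℝ)^(-δ3))) atTop (nhds 0) := by
    have := ENNReal.tendsto_ofReal (hterm C₂ δ3 hδ3pos)
    simpa using this
  -- main eventual bounds
  have hmain1 : ∀ᶠ n : ℕ in atTop ⊓ Filter.principal (goodSet η),
      μ {ω | ∃ i ∈ Finset.Icc 1 (kseq η n), ∃ j ∈ Finset.Icc 1 (kseq η n),
          ∃ l ∈ Finset.Icc 1 (kseq η n), j ≠ l ∧
          blockExceed X (a (n ^ 2)) (rseq η n) i j ((a (n ^ 2)) ^ ((κ - 1) / 2)) ω ∧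
          blockExceed X (a (n ^ 2)) (rseq η n) i l ((a (n ^ 2)) ^ ((κ - 1) / 2)) ω}
        ≤ ENNReal.ofReal ((C₂*C₂) * (n:ℝ)^(-δ1) + (2*(m:ℝ)*(2*(m:ℝ)+1)^2*C₂) * (n:ℝ)^(-δ2)
            + (9*(2*(m:ℝ)+1)^2*C₂) * (n:ℝ)^(-δ3)) := by
    rw [Filter.eventually_inf_principal]
    filter_upwards [hkey] with n hkeyn hgood
    obtain ⟨hkr, hbn0, hmr, hn1⟩ := hkeyn
    obtain ⟨hrcast, hkcast⟩ := hgood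
    have hn0 : (0:ℝ) < (n:ℝ) := by exact_mod_cast hn1
    have hmr' : m < rseq η n := by
      rw [← hrcast] at hmr
      exact_mod_cast hmr
    have hbd := offdiag_bound μ X hmeas hstat hdep (kseq η n) (rseq η n) hmr'
      (a (n^2)) ((a (n^2)) ^ ((κ-1)/2)) hbn0
    have htn : (a (n^2)) ^ ((κ-1)/2) * (a (n^2)) = (b n)^((κ+1)/2) := by
      have hb' : (0:ℝ) < a (n^2) := hbn0
      nth_rewrite 2 [← Real.rpow_one (a (n^2))]
      rw [← Real.rpow_add hb']
      rw [hbdef]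
      congr 1
      ring
    set ρ : ℝ := C₂ * (n:ℝ)^(-γ) with hρdef
    have hρ0 : (0:ℝ) ≤ ρ := by
      rw [hρdef]
      exact mul_nonneg hC₂0.le (Real.rpow_nonneg (Nat.cast_nonneg n) _)
    have hple : μ {ω | (a (n^2)) ^ ((κ-1)/2) * (a (n^2)) < |X (0,0) ω|}
        ≤ ENNReal.ofReal ρ := by
      rw [htn, ← ENNReal.ofReal_toReal
        (measure_ne_top μ {ω | (b n)^((κ+1)/2) < |X (0,0) ω|})]
      exact ENNReal.ofReal_le_ofReal (by rw [hρdef]; exact hkr)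
    refine hbd.trans ?_
    have hauxp : ∀ u v : ℝ, (n:ℝ)^u * (n:ℝ)^v = (n:ℝ)^(u+v) :=
      fun u v => (Real.rpow_add hn0 u v).symm
    have h1 : (n:ℝ)^(-δ1) = (n:ℝ)^η*(n:ℝ)^η*(n:ℝ)^η
        *((n:ℝ)^(1-η)*(n:ℝ)^(1-η)*(n:ℝ)^(1-η)*(n:ℝ)^(1-η))*((n:ℝ)^(-γ)*(n:ℝ)^(-γ)) := by
      simp only [hauxp]
      congr 1
      rw [hδ1def]
      ring
    have h2 : (n:ℝ)^(-δ2) = (n:ℝ)^η*(n:ℝ)^η*(n:ℝ)^(1-η)*(n:ℝ)^(-γ) := by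
      simp only [hauxp]
      congr 1
      rw [hδ2def]
      ring
    have h3 : (n:ℝ)^(-δ3) = (n:ℝ)^η*((n:ℝ)^(1-η)*(n:ℝ)^(1-η))*(n:ℝ)^(-γ) := by
      simp only [hauxp]
      congr 1
      rw [hδ3def]
      ring
    calc ((kseq η n * kseq η n * kseq η n
          * (rseq η n * rseq η n * rseq η n * rseq η n) : ℕ) : ℝ≥0∞)
          * μ {ω | (a (n^2))^((κ-1)/2) * (a (n^2)) < |X (0,0) ω|}
          * μ {ω | (a (n^2))^((κ-1)/2) * (a (n^2)) < |X (0,0) ω|}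
        + ((kseq η n * (rseq η n*(2*m+1)) * (kseq η n * (2*(m*(2*m+1))))
          + kseq η n * ((3*(rseq η n*(2*m+1))) * (3*(rseq η n*(2*m+1)))) : ℕ) : ℝ≥0∞)
          * μ {ω | (a (n^2))^((κ-1)/2) * (a (n^2)) < |X (0,0) ω|}
        ≤ ((kseq η n * kseq η n * kseq η n
          * (rseq η n * rseq η n * rseq η n * rseq η n) : ℕ) : ℝ≥0∞)
            * ENNReal.ofReal ρ * ENNReal.ofReal ρ
          + ((kseq η n * (rseq η n*(2*m+1)) * (kseq η n * (2*(m*(2*m+1))))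
            + kseq η n * ((3*(rseq η n*(2*m+1))) * (3*(rseq η n*(2*m+1)))) : ℕ) : ℝ≥0∞)
            * ENNReal.ofReal ρ := by
          gcongr <;> exact hple
      _ = ENNReal.ofReal (((kseq η n * kseq η n * kseq η n
            * (rseq η n * rseq η n * rseq η n * rseq η n) : ℕ) : ℝ)
              * ρ * ρ
            + ((kseq η n * (rseq η n*(2*m+1)) * (kseq η n * (2*(m*(2*m+1))))
              + kseq η n * ((3*(rseq η n*(2*m+1))) * (3*(rseq η n*(2*m+1)))) : ℕ) : ℝ)
              * ρ) := by
          rw [ENNReal.ofReal_add (mul_nonneg (mul_nonneg (Nat.cast_nonneg _) hρ0) hρ0)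
              (mul_nonneg (Nat.cast_nonneg _) hρ0),
            ENNReal.ofReal_mul (mul_nonneg (Nat.cast_nonneg _) hρ0),
            ENNReal.ofReal_mul (Nat.cast_nonneg _),
            ENNReal.ofReal_mul (Nat.cast_nonneg _),
            ENNReal.ofReal_natCast, ENNReal.ofReal_natCast]
      _ ≤ _ := by
          apply ENNReal.ofReal_le_ofReal
          apply le_of_eq
          rw [h1, h2, h3, hρdef]
          push_cast
          rw [hkcast, hrcast]
          ring
  have hmain2 : ∀ᶠ n : ℕ in atTop ⊓ Filter.principal (goodSet η),
      μ {ω | ∃ i ∈ Finset.Icc 1 (kseq η n),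
          blockExceed X (a (n ^ 2)) (rseq η n) i i ((a (n ^ 2)) ^ ((κ - 1) / 2)) ω}
        ≤ ENNReal.ofReal (C₂ * (n:ℝ)^(-δ3)) := by
    rw [Filter.eventually_inf_principal]
    filter_upwards [hkey] with n hkeyn hgood
    obtain ⟨hkr, hbn0, hmr, hn1⟩ := hkeyn
    obtain ⟨hrcast, hkcast⟩ := hgood
    have hn0 : (0:ℝ) < (n:ℝ) := by exact_mod_cast hn1
    have hbd := diag_bound μ X hmeas hstat (kseq η n) (rseq η n)
      (a (n^2)) ((a (n^2)) ^ ((κ-1)/2)) hbn0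
    have htn : (a (n^2)) ^ ((κ-1)/2) * (a (n^2)) = (b n)^((κ+1)/2) := by
      have hb' : (0:ℝ) < a (n^2) := hbn0
      nth_rewrite 2 [← Real.rpow_one (a (n^2))]
      rw [← Real.rpow_add hb']
      rw [hbdef]
      congr 1
      ring
    set ρ : ℝ := C₂ * (n:ℝ)^(-γ) with hρdef
    have hρ0 : (0:ℝ) ≤ ρ := by
      rw [hρdef]
      exact mul_nonneg hC₂0.le (Real.rpow_nonneg (Nat.cast_nonneg n) _)
    have hple : μ {ω | (a (n^2)) ^ ((κ-1)/2) * (a (n^2)) < |X (0,0) ω|}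
        ≤ ENNReal.ofReal ρ := by
      rw [htn, ← ENNReal.ofReal_toReal
        (measure_ne_top μ {ω | (b n)^((κ+1)/2) < |X (0,0) ω|})]
      exact ENNReal.ofReal_le_ofReal (by rw [hρdef]; exact hkr)
    refine hbd.trans ?_
    have hauxp : ∀ u v : ℝ, (n:ℝ)^u * (n:ℝ)^v = (n:ℝ)^(u+v) :=
      fun u v => (Real.rpow_add hn0 u v).symm
    have h3 : (n:ℝ)^(-δ3) = (n:ℝ)^η*((n:ℝ)^(1-η)*(n:ℝ)^(1-η))*(n:ℝ)^(-γ) := by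
      simp only [hauxp]
      congr 1
      rw [hδ3def]
      ring
    calc ((kseq η n * (rseq η n * rseq η n) : ℕ) : ℝ≥0∞)
          * μ {ω | (a (n^2))^((κ-1)/2) * (a (n^2)) < |X (0,0) ω|}
        ≤ ((kseq η n * (rseq η n * rseq η n) : ℕ) : ℝ≥0∞)
            * ENNReal.ofReal ρ := by gcongr
      _ = ENNReal.ofReal (((kseq η n * (rseq η n * rseq η n) : ℕ) : ℝ)
            * ρ) := by
          rw [ENNReal.ofReal_mul (Nat.cast_nonneg _), ENNReal.ofReal_natCast]
      _ ≤ _ := by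
          apply ENNReal.ofReal_le_ofReal
          apply le_of_eq
          rw [h3, hρdef]
          push_cast
          rw [hkcast, hrcast]
          ring
  constructor
  · exact tendsto_of_tendsto_of_tendsto_of_le_of_le' tendsto_const_nhds
      (hlim1.mono_left inf_le_left) (Filter.Eventually.of_forall fun n => zero_le) hmain1
  · exact tendsto_of_tendsto_of_tendsto_of_le_of_le' tendsto_const_nhds
      (hlim2.mono_left inf_le_left) (Filter.Eventually.of_forall fun n => zero_le) hmain2

end
end

section
/- Let (X_{ij})_{i,j∈ℤ} be a stationary m-dependent random field that is regularly varying with index α∈(0,2), let (p_n) be positive integers with p_n/n → γ ∈ (0,∞), and let A_n := (X_{ij}/a_{n·p_n})_{1≤i≤p_n, 1≤j≤n}. Then for every δ>0, lim_{ε→0⁺} limsup_{n→∞} ℙ(‖A_n^{<ε}·(A_n^{>ε})ᵀ‖ > δ) = 0. -/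
open MeasureTheory ProbabilityTheory Filter Matrix

noncomputable section

set_option maxHeartbeats 2000000

open scoped ENNReal NNReal

def st16sq {p q : ℕ} (M : Matrix (Fin p) (Fin q) ℝ) : ℝ := ∑ i, ∑ j, (M i j)^2

def st16sq01 (u y : ℝ) : ℝ := if |y| ≤ u then y^2 else 0

lemma st16sq_nonneg {p q : ℕ} (M : Matrix (Fin p) (Fin q) ℝ) : 0 ≤ st16sq M := by
  apply Finset.sum_nonneg; intros; apply Finset.sum_nonneg; intros; positivity

lemma st16_specNorm_nonneg {p q : ℕ} (M : Matrix (Fin p) (Fin q) ℝ) : 0 ≤ specNorm M :=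
  norm_nonneg _

lemma st16_opNorm_le {p q : ℕ} (M : Matrix (Fin p) (Fin q) ℝ) :
    specNorm M ≤ Real.sqrt (st16sq M) := by
  apply ContinuousLinearMap.opNorm_le_bound _ (Real.sqrt_nonneg _)
  intro x
  rw [LinearMap.coe_toContinuousLinearMap']
  have hx : ‖x‖ = Real.sqrt (∑ j, (x j)^2) := by
    rw [EuclideanSpace.norm_eq]
    apply congrArg
    apply Finset.sum_congr rfl
    intro j _
    rw [Real.norm_eq_abs, sq_abs]
  have happ : ∀ i, (Matrix.toEuclideanLin M x) i = ∑ j, M i j * x j := by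
    intro i
    rw [Matrix.toEuclideanLin_apply]
    simp [Matrix.mulVec, dotProduct]
  rw [EuclideanSpace.norm_eq]
  have h1 : ∑ i, ‖(Matrix.toEuclideanLin M x) i‖^2 ≤ st16sq M * ∑ j, (x j)^2 := by
    rw [st16sq, Finset.sum_mul]
    apply Finset.sum_le_sum
    intro i _
    rw [Real.norm_eq_abs, sq_abs, happ]
    exact Finset.sum_mul_sq_le_sq_mul_sq _ _ _
  calc Real.sqrt (∑ i, ‖(Matrix.toEuclideanLin M x) i‖^2)
      ≤ Real.sqrt (st16sq M * ∑ j, (x j)^2) := Real.sqrt_le_sqrt h1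
    _ = Real.sqrt (st16sq M) * ‖x‖ := by
        rw [Real.sqrt_mul (st16sq_nonneg M), hx]

lemma st16sq_mul_le {p q r : ℕ} (B : Matrix (Fin p) (Fin q) ℝ) (C : Matrix (Fin r) (Fin q) ℝ) :
    st16sq (B * Cᵀ) ≤ st16sq B * st16sq C := by
  unfold st16sq
  rw [Finset.sum_mul_sum]
  apply Finset.sum_le_sum
  intro i _
  apply Finset.sum_le_sum
  intro k _
  rw [Matrix.mul_apply]
  simp only [Matrix.transpose_apply]
  exact Finset.sum_mul_sq_le_sq_mul_sq _ _ _

lemma st16_det_key {p q : ℕ} (B C : Matrix (Fin p) (Fin q) ℝ) :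
    specNorm (B * Cᵀ) ^ 2 ≤ st16sq B * st16sq C := by
  have h1 := st16_opNorm_le (B * Cᵀ)
  have h2 : specNorm (B * Cᵀ) ^ 2 ≤ Real.sqrt (st16sq (B * Cᵀ)) ^ 2 :=
    pow_le_pow_left₀ (norm_nonneg _) h1 2
  have h3 : Real.sqrt (st16sq (B * Cᵀ)) ^ 2 = st16sq (B * Cᵀ) :=
    Real.sq_sqrt (st16sq_nonneg _)
  calc specNorm (B * Cᵀ) ^ 2 ≤ st16sq (B * Cᵀ) := by rw [← h3]; exact h2
    _ ≤ st16sq B * st16sq C := st16sq_mul_le B C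

lemma st16sq01_nonneg (u y : ℝ) : 0 ≤ st16sq01 u y := by
  unfold st16sq01; split <;> positivity

lemma st16sq01_measurable (u : ℝ) : Measurable (st16sq01 u) := by
  unfold st16sq01
  apply Measurable.ite _ (by fun_prop) measurable_const
  exact measurableSet_le (by fun_prop) measurable_const

/-- tail function of a finite measure is antitone -/
lemma st16_tail_anti (ν : Measure ℝ) [IsFiniteMeasure ν] :
    Antitone (fun x : ℝ => (ν {y | x < |y|}).toReal) := by
  intro u v huv
  apply ENNReal.toReal_mono (measure_ne_top _ _)
  apply measure_mono
  intro y hy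
  exact lt_of_le_of_lt huv hy

lemma st16_markov {Ω : Type*} [MeasurableSpace Ω] (μ : Measure Ω) (S : Ω → ℝ)
    (hS : Measurable S) (v : ℝ) (hv : 0 < v) :
    μ {ω | v < S ω} ≤ (∫⁻ ω, ENNReal.ofReal (S ω) ∂μ) / ENNReal.ofReal v := by
  have h1 : μ {ω | v < S ω} ≤ μ {ω | ENNReal.ofReal v ≤ ENNReal.ofReal (S ω)} := by
    apply measure_mono
    intro ω hω
    exact ENNReal.ofReal_le_ofReal (le_of_lt hω)
  have h2 := mul_meas_ge_le_lintegral₀ (μ := μ)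
    (f := fun ω => ENNReal.ofReal (S ω)) (hS.ennreal_ofReal.aemeasurable) (ENNReal.ofReal v)
  rw [ENNReal.le_div_iff_mul_le (Or.inl (by simp [hv])) (Or.inl ENNReal.ofReal_ne_top)]
  calc μ {ω | v < S ω} * ENNReal.ofReal v
      ≤ μ {ω | ENNReal.ofReal v ≤ ENNReal.ofReal (S ω)} * ENNReal.ofReal v :=
        mul_le_mul_left h1 _
    _ = ENNReal.ofReal v * μ {ω | ENNReal.ofReal v ≤ ENNReal.ofReal (S ω)} := mul_comm _ _
    _ ≤ _ := h2

lemma st16_msble_tailset (x : ℝ) : MeasurableSet {y : ℝ | x < |y|} := by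
  have : {y : ℝ | x < |y|} = (fun y : ℝ => |y|) ⁻¹' (Set.Ioi x) := rfl
  rw [this]
  exact measurableSet_Ioi.preimage (by fun_prop)

lemma st16_pow_step (g : ℝ → ℝ) (x₀ lam : ℝ) (hx₀ : 0 < x₀) (hlam : 1 < lam)
    (hstep : ∀ x, x₀ ≤ x → lam * g x ≤ g (2*x)) :
    ∀ k : ℕ, lam^k * g x₀ ≤ g (2^k * x₀) := by
  intro k
  induction k with
  | zero => simp
  | succ k ih =>
    have h1 : x₀ ≤ 2^k * x₀ := le_mul_of_one_le_left hx₀.le (one_le_pow₀ one_le_two)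
    have h2 := hstep _ h1
    have h3 : lam * (lam^k * g x₀) ≤ lam * g (2^k * x₀) :=
      mul_le_mul_of_nonneg_left ih (by linarith)
    calc lam^(k+1) * g x₀ = lam * (lam^k * g x₀) := by ring
      _ ≤ lam * g (2^k * x₀) := h3
      _ ≤ g (2*(2^k * x₀)) := h2
      _ = g (2^(k+1) * x₀) := by ring_nf

lemma st16_g_atTop (ν : Measure ℝ) [IsProbabilityMeasure ν] (x₀ lam : ℝ)
    (hx₀ : 0 < x₀) (hlam : 1 < lam)
    (hg0 : 0 < x₀^2 * (ν {y | x₀ < |y|}).toReal)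
    (hstep : ∀ x, x₀ ≤ x →
      lam * (x^2 * (ν {y | x < |y|}).toReal) ≤ (2*x)^2 * (ν {y | 2*x < |y|}).toReal) :
    Tendsto (fun x : ℝ => x^2 * (ν {y | x < |y|}).toReal) atTop atTop := by
  set g : ℝ → ℝ := fun x => x^2 * (ν {y | x < |y|}).toReal with hgdef
  have hpow := st16_pow_step g x₀ lam hx₀ hlam hstep
  rw [tendsto_atTop]
  intro M
  obtain ⟨K, hK⟩ : ∃ K : ℕ, 4*M/(g x₀) ≤ lam^K :=
    ((tendsto_pow_atTop_atTop_of_one_lt hlam).eventually_ge_atTop _).exists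
  have hMK : M ≤ lam^K * g x₀ / 4 := by
    rw [div_le_iff₀ hg0] at hK
    simp only [hgdef]
    linarith
  rw [eventually_atTop]
  refine ⟨2^K * x₀, fun x hx => ?_⟩
  have hx0 : (0:ℝ) < x := lt_of_lt_of_le (by positivity) hx
  have hxd : (2:ℝ)^K ≤ x / x₀ := by rw [le_div_iff₀ hx₀]; linarith [hx]
  set m := ⌊x/x₀⌋₊ with hm
  have hm1 : 2^K ≤ m := by
    apply Nat.le_floor; push_cast; exact hxd
  have hm0 : m ≠ 0 := (lt_of_lt_of_le (Nat.two_pow_pos K) hm1).ne'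
  set k := Nat.log 2 m with hk
  have hkK : K ≤ k := (Nat.le_log_iff_pow_le one_lt_two hm0).mpr hm1
  have h2k : (2:ℝ)^k * x₀ ≤ x := by
    have := Nat.pow_log_le_self 2 hm0
    have h1 : ((2^k : ℕ) : ℝ) ≤ m := by exact_mod_cast this
    have h2 : (m:ℝ) ≤ x/x₀ := Nat.floor_le (by positivity)
    push_cast at h1
    rw [← le_div_iff₀ hx₀]; linarith
  have h2k1 : x < 2^(k+1) * x₀ := by
    have := Nat.lt_pow_succ_log_self one_lt_two m
    have h1 : (m:ℝ) + 1 ≤ 2^(k+1) := by exact_mod_cast Nat.succ_le_of_lt this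
    have h2 : x/x₀ < (m:ℝ) + 1 := Nat.lt_floor_add_one _
    rw [div_lt_iff₀ hx₀] at h2
    nlinarith [hx₀]
  -- bridge
  have hanti := st16_tail_anti ν (le_of_lt h2k1)
  have hGz : (0:ℝ) ≤ (ν {y | 2^(k+1) * x₀ < |y|}).toReal := ENNReal.toReal_nonneg
  have hgx : g (2^(k+1) * x₀) / 4 ≤ g x := by
    simp only [hgdef]
    have hx2 : (2^k * x₀)^2 ≤ x^2 := by
      apply pow_le_pow_left₀ (by positivity) h2k
    have : (2^(k+1) * x₀ : ℝ)^2 = 4 * (2^k * x₀)^2 := by ring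
    rw [this]
    calc 4 * (2^k*x₀)^2 * (ν {y | 2^(k+1)*x₀ < |y|}).toReal / 4
        = (2^k*x₀)^2 * (ν {y | 2^(k+1)*x₀ < |y|}).toReal := by ring
      _ ≤ x^2 * (ν {y | x < |y|}).toReal := by
          apply mul_le_mul hx2 hanti hGz (by positivity)
  have hit := hpow (k+1)
  have hlamK : lam^K ≤ lam^(k+1) := pow_le_pow_right₀ (by linarith) (by omega)
  have hgx₀ : 0 < g x₀ := hg0
  calc M ≤ lam^K * g x₀ / 4 := hMK
    _ ≤ lam^(k+1) * g x₀ / 4 := by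
        apply div_le_div_of_nonneg_right _ (by norm_num)
        exact mul_le_mul_of_nonneg_right hlamK hgx₀.le
    _ ≤ g (2^(k+1) * x₀) / 4 := by
        apply div_le_div_of_nonneg_right hit (by norm_num)
    _ ≤ g x := hgx

lemma st16_small_case (ν : Measure ℝ) [IsProbabilityMeasure ν] (u : ℝ) (hu : 0 ≤ u) :
    (∫⁻ y, ENNReal.ofReal (st16sq01 u y) ∂ν) ≤ ENNReal.ofReal (u^2) := by
  calc (∫⁻ y, ENNReal.ofReal (st16sq01 u y) ∂ν)
      ≤ ∫⁻ _, ENNReal.ofReal (u^2) ∂ν := by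
        apply lintegral_mono
        intro y
        apply ENNReal.ofReal_le_ofReal
        unfold st16sq01
        split
        · rename_i h
          calc y^2 = |y|^2 := (sq_abs y).symm
            _ ≤ u^2 := by apply pow_le_pow_left₀ (abs_nonneg y) h
        · positivity
    _ = ENNReal.ofReal (u^2) := by simp

lemma st16_karamata (ν : Measure ℝ) [IsProbabilityMeasure ν] (x₀ lam : ℝ)
    (hx₀ : 0 < x₀) (hlam : 1 < lam)
    (hstep : ∀ x, x₀ ≤ x →
      lam * (x^2 * (ν {y | x < |y|}).toReal) ≤ (2*x)^2 * (ν {y | 2*x < |y|}).toReal) :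
    ∀ u, x₀ ≤ u → (∫⁻ y, ENNReal.ofReal (st16sq01 u y) ∂ν) ≤
      ENNReal.ofReal (4*x₀^2 + (4/(lam-1)) * (u^2 * (ν {y | u < |y|}).toReal)) := by
  set C : ℝ := 4/(lam-1) with hC
  have hC0 : 0 ≤ C := by
    apply div_nonneg (by norm_num); linarith
  set g : ℝ → ℝ := fun x => x^2 * (ν {y | x < |y|}).toReal with hgdef
  have hg0 : ∀ x, 0 ≤ g x := fun x => by
    simp only [hgdef]; positivity
  -- reduce to bounded u
  suffices h : ∀ n : ℕ, ∀ u, x₀ ≤ u → u ≤ x₀ * 2^n →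
      (∫⁻ y, ENNReal.ofReal (st16sq01 u y) ∂ν) ≤ ENNReal.ofReal (4*x₀^2 + C * g u) by
    intro u hu
    obtain ⟨n, hn⟩ : ∃ n : ℕ, u/x₀ < 2^n := pow_unbounded_of_one_lt (u/x₀) one_lt_two
    exact h n u hu (by rw [div_lt_iff₀ hx₀] at hn; linarith)
  -- small case helper
  have hsmall : ∀ u, 0 ≤ u → u ≤ 2*x₀ →
      (∫⁻ y, ENNReal.ofReal (st16sq01 u y) ∂ν) ≤ ENNReal.ofReal (4*x₀^2 + C * g u) := by
    intro u hu h2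
    calc (∫⁻ y, ENNReal.ofReal (st16sq01 u y) ∂ν) ≤ ENNReal.ofReal (u^2) :=
          st16_small_case ν u hu
      _ ≤ ENNReal.ofReal (4*x₀^2 + C * g u) := by
          apply ENNReal.ofReal_le_ofReal
          have : u^2 ≤ 4*x₀^2 := by nlinarith
          have := mul_nonneg hC0 (hg0 u)
          linarith
  intro n
  induction n with
  | zero =>
    intro u h1 h2
    exact hsmall u (le_trans hx₀.le h1) (by nlinarith)
  | succ n ih =>
    intro u h1 h2
    by_cases hu2 : u ≤ 2*x₀
    · exact hsmall u (le_trans hx₀.le h1) hu2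
    push_neg at hu2
    have hu0 : 0 < u := by linarith
    have h3 : x₀ ≤ u/2 := by linarith
    have h4 : u/2 ≤ x₀ * 2^n := by
      have : (x₀ * 2^(n+1) : ℝ) = 2 * (x₀ * 2^n) := by ring
      rw [this] at h2; linarith
    have ihu := ih (u/2) h3 h4
    -- pointwise bound
    have hpt : ∀ y, ENNReal.ofReal (st16sq01 u y) ≤ ENNReal.ofReal (st16sq01 (u/2) y)
        + Set.indicator {y : ℝ | u/2 < |y|} (fun _ => ENNReal.ofReal (u^2)) y := by
      intro y
      by_cases hy : |y| ≤ u/2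
      · have hind : Set.indicator {y : ℝ | u/2 < |y|}
            (fun _ => ENNReal.ofReal (u^2)) y = 0 := by
          apply Set.indicator_of_notMem
          simp only [Set.mem_setOf_eq, not_lt]
          exact hy
        rw [hind, add_zero]
        apply ENNReal.ofReal_le_ofReal
        unfold st16sq01
        rw [if_pos hy, if_pos (le_trans hy (by linarith))]
      · have hind : Set.indicator {y : ℝ | u/2 < |y|}
            (fun _ => ENNReal.ofReal (u^2)) y = ENNReal.ofReal (u^2) := by
          apply Set.indicator_of_mem
          simp only [Set.mem_setOf_eq]
          push_neg at hy
          exact hy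
        rw [hind]
        calc ENNReal.ofReal (st16sq01 u y) ≤ ENNReal.ofReal (u^2) := by
              apply ENNReal.ofReal_le_ofReal
              unfold st16sq01
              split
              · rename_i h
                calc y^2 = |y|^2 := (sq_abs y).symm
                  _ ≤ u^2 := by apply pow_le_pow_left₀ (abs_nonneg y) h
              · positivity
          _ ≤ _ := le_add_self
    have hint : (∫⁻ y, ENNReal.ofReal (st16sq01 u y) ∂ν) ≤
        (∫⁻ y, ENNReal.ofReal (st16sq01 (u/2) y) ∂ν) +
        ENNReal.ofReal (u^2) * ν {y : ℝ | u/2 < |y|} := by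
      calc (∫⁻ y, ENNReal.ofReal (st16sq01 u y) ∂ν)
          ≤ ∫⁻ y, (ENNReal.ofReal (st16sq01 (u/2) y)
            + Set.indicator {y : ℝ | u/2 < |y|} (fun _ => ENNReal.ofReal (u^2)) y) ∂ν :=
            lintegral_mono hpt
        _ = (∫⁻ y, ENNReal.ofReal (st16sq01 (u/2) y) ∂ν) +
            ∫⁻ y, Set.indicator {y : ℝ | u/2 < |y|} (fun _ => ENNReal.ofReal (u^2)) y ∂ν :=
            lintegral_add_left ((st16sq01_measurable _).ennreal_ofReal) _
        _ = (∫⁻ y, ENNReal.ofReal (st16sq01 (u/2) y) ∂ν) +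
            ENNReal.ofReal (u^2) * ν {y : ℝ | u/2 < |y|} := by
            rw [lintegral_indicator_const (st16_msble_tailset _)]
    have htail : ENNReal.ofReal (u^2) * ν {y : ℝ | u/2 < |y|}
        = ENNReal.ofReal (u^2 * (ν {y : ℝ | u/2 < |y|}).toReal) := by
      rw [ENNReal.ofReal_mul (by positivity), ENNReal.ofReal_toReal (measure_ne_top _ _)]
    -- real arithmetic
    have hreal : 4*x₀^2 + C * g (u/2) + u^2 * (ν {y : ℝ | u/2 < |y|}).toReal
        ≤ 4*x₀^2 + C * g u := by
      have hkey := hstep (u/2) h3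
      have h2u : 2*(u/2) = u := by ring
      rw [h2u] at hkey
      have hlg : lam * g (u/2) ≤ g u := hkey
      have hgu2 : u^2 * (ν {y : ℝ | u/2 < |y|}).toReal = 4 * g (u/2) := by
        simp only [hgdef]; ring
      rw [hgu2]
      have hne : lam - 1 ≠ 0 := by linarith
      have hClam : C * lam = C + 4 := by
        rw [hC]
        field_simp
        ring
      nlinarith [hg0 (u/2), hg0 u, mul_le_mul_of_nonneg_left hlg hC0]
    calc (∫⁻ y, ENNReal.ofReal (st16sq01 u y) ∂ν)
        ≤ (∫⁻ y, ENNReal.ofReal (st16sq01 (u/2) y) ∂ν) +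
          ENNReal.ofReal (u^2) * ν {y : ℝ | u/2 < |y|} := hint
      _ ≤ ENNReal.ofReal (4*x₀^2 + C * g (u/2)) +
          ENNReal.ofReal (u^2 * (ν {y : ℝ | u/2 < |y|}).toReal) := by
          rw [htail]; exact add_le_add_left ihu _
      _ = ENNReal.ofReal (4*x₀^2 + C * g (u/2) + u^2 * (ν {y : ℝ | u/2 < |y|}).toReal) := by
          rw [← ENNReal.ofReal_add (by positivity) (by positivity)]
      _ ≤ ENNReal.ofReal (4*x₀^2 + C * g u) := ENNReal.ofReal_le_ofReal hreal

lemma st16_entry_le (z aN ε : ℝ) (h : 0 < aN) :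
    (z/aN - (if ε < |z/aN| then z/aN else 0))^2 = st16sq01 (ε*aN) z / aN^2 := by
  have habs : |z/aN| = |z|/aN := by rw [abs_div, abs_of_pos h]
  unfold st16sq01
  by_cases hz : |z| ≤ ε*aN
  · have h1 : ¬ ε < |z/aN| := by
      rw [habs, not_lt, div_le_iff₀ h]; linarith [hz]
    rw [if_neg h1, if_pos hz, sub_zero, div_pow]
  · have h1 : ε < |z/aN| := by
      rw [habs, lt_div_iff₀ h]; push_neg at hz; linarith [hz]
    rw [if_pos h1, if_neg hz, sub_self]
    simp

lemma st16_conv (k : ℕ) (Q r v : ℝ) (hQ : 0 ≤ Q) (hr : 0 < r) (hv : 0 < v) :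
    ((k:ℝ≥0∞) * ENNReal.ofReal Q) * (ENNReal.ofReal r)⁻¹ / ENNReal.ofReal v
      = ENNReal.ofReal ((k:ℝ) * Q / (r * v)) := by
  rw [div_eq_mul_inv, ← ENNReal.ofReal_inv_of_pos hr, ← ENNReal.ofReal_inv_of_pos hv,
    ← ENNReal.ofReal_natCast k, ← ENNReal.ofReal_mul (by positivity),
    ← ENNReal.ofReal_mul (by positivity), ← ENNReal.ofReal_mul (by positivity)]
  congr 1
  field_simp

/-- Lemma 5.1 of the paper: for the sample covariance setting with
`α ∈ (0,2)`, `lim_{ε→0⁺} limsup_n ℙ(‖A^{<ε}(A^{>ε})ᵀ‖ > δ) = 0` for every `δ > 0`. -/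
theorem stmt16 {Ω : Type*} [MeasurableSpace Ω] (μ : Measure Ω) [IsProbabilityMeasure μ]
    (X : ℤ × ℤ → Ω → ℝ) (hmeas : ∀ p, Measurable (X p))
    (m : ℕ) (hstat : IsStationaryField μ X) (hdep : IsMDependent μ X m)
    (α : ℝ) (hα0 : 0 < α) (hα2 : α < 2) (hreg : IsRegVarying μ X α)
    (a : ℕ → ℝ) (ha : IsNormSeq μ X a)
    (p : ℕ → ℕ) (hp0 : ∀ n, 0 < p n)
    (γ : ℝ) (hγ : 0 < γ)
    (hp : Tendsto (fun n : ℕ => (p n : ℝ) / (n : ℝ)) atTop (nhds γ)) :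
    ∀ δ : ℝ, 0 < δ →
      Tendsto
        (fun ε : ℝ =>
          Filter.limsup
            (fun n : ℕ => μ {ω | δ < specNorm
                (truncLe (dataMat X (a (n * p n)) (p n) n ω) ε *
                  (truncGt (dataMat X (a (n * p n)) (p n) n ω) ε)ᵀ)})
            atTop)
        (nhdsWithin 0 (Set.Ioi 0)) (nhds 0) := by
  intro δ hδ
  obtain ⟨haT, ha2⟩ := ha
  obtain ⟨L, ⟨hLpos, hLrat⟩, hGL⟩ := hreg
  -- the common one-dimensional distribution
  set ρ : Measure ℝ := Measure.map (X (0,0)) μ with hρdef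
  haveI hρP : IsProbabilityMeasure ρ := Measure.isProbabilityMeasure_map (hmeas (0,0)).aemeasurable
  set G : ℝ → ℝ := fun x => (μ {ω | x < |X (0, 0) ω|}).toReal with hGdef
  -- identical marginals
  have hmap : ∀ q : ℤ × ℤ, Measure.map (X q) μ = ρ := by
    intro q
    have hF : Measurable (fun ω => fun pt : ℤ × ℤ => X (pt.1 + q.1, pt.2 + q.2) ω) :=
      measurable_pi_lambda _ (fun pt => hmeas _)
    have hF0 : Measurable (fun ω => fun pt : ℤ × ℤ => X pt ω) :=
      measurable_pi_lambda _ (fun pt => hmeas _)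
    have heval : Measurable (fun g : (ℤ × ℤ) → ℝ => g (0,0)) := measurable_pi_apply _
    have h1 := congrArg (Measure.map (fun g : (ℤ × ℤ) → ℝ => g (0,0))) (hstat q.1 q.2)
    rw [Measure.map_map heval hF, Measure.map_map heval hF0] at h1
    have h2 : (fun g : (ℤ × ℤ) → ℝ => g (0,0)) ∘ (fun ω => fun pt : ℤ × ℤ =>
        X (pt.1 + q.1, pt.2 + q.2) ω) = X q := by
      funext ω; simp
    have h3 : (fun g : (ℤ × ℤ) → ℝ => g (0,0)) ∘ (fun ω => fun pt : ℤ × ℤ => X pt ω)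
        = X (0,0) := rfl
    rw [h2, h3] at h1
    exact h1
  have hset : ∀ (q : ℤ × ℤ) (x : ℝ), μ {ω | x < |X q ω|} = ρ {y | x < |y|} := by
    intro q x
    rw [← hmap q, Measure.map_apply (hmeas q) (st16_msble_tailset x)]
    rfl
  have hρG : ∀ x, (ρ {y | x < |y|}).toReal = G x := by
    intro x; simp only [hGdef]; rw [← hset (0,0) x]
  have hint : ∀ (q : ℤ × ℤ) (f : ℝ → ℝ≥0∞), Measurable f →
      ∫⁻ ω, f (X q ω) ∂μ = ∫⁻ y, f y ∂ρ := by
    intro q f hf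
    rw [← hmap q, lintegral_map hf (hmeas q)]
  -- positivity of G
  have hGpos : ∀ x : ℝ, 0 < x → 0 < G x := by
    intro x hx
    rw [hGdef]
    simp only []
    rw [hGL x hx]
    exact mul_pos (Real.rpow_pos_of_pos hx _) (hLpos x hx)
  have hGnn : ∀ x : ℝ, 0 ≤ G x := fun x => ENNReal.toReal_nonneg
  -- slow-variation constants
  set τ : ℝ := (2:ℝ)^((2:ℝ)-α) with hτdef
  have hτ1 : 1 < τ := by
    rw [hτdef]
    apply Real.one_lt_rpow_iff_of_pos (by norm_num) |>.mpr
    exact Or.inl ⟨one_lt_two, by linarith⟩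
  set lam : ℝ := (1+τ)/2 with hlamdef
  have hlam1 : 1 < lam := by rw [hlamdef]; linarith
  have hlamτ : lam < τ := by rw [hlamdef]; linarith
  have hτ0 : 0 < τ := by linarith
  obtain ⟨x₀, hx₀1, hx₀step⟩ : ∃ x₀ : ℝ, 1 ≤ x₀ ∧
      ∀ x, x₀ ≤ x → lam * (x^2 * G x) ≤ (2*x)^2 * G (2*x) := by
    have hra : Tendsto (fun x => L (2*x) / L x) atTop (nhds 1) := hLrat 2 two_pos
    have hlt : lam/τ < 1 := (div_lt_one hτ0).mpr hlamτ
    have hev1 : ∀ᶠ x in atTop, lam/τ < L (2*x) / L x := hra.eventually (eventually_gt_nhds hlt)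
    obtain ⟨x₁, hx₁⟩ := (hev1.and (eventually_ge_atTop (1:ℝ))).exists_forall_of_atTop
    refine ⟨max x₁ 1, le_max_right _ _, ?_⟩
    intro x hx
    have hx1 : x₁ ≤ x := le_trans (le_max_left _ _) hx
    have hxpos : (0:ℝ) < x := lt_of_lt_of_le one_pos (le_trans (le_max_right _ _) hx)
    obtain ⟨hrat, -⟩ := hx₁ x hx1
    have hLx : 0 < L x := hLpos x hxpos
    have hL2x : 0 < L (2*x) := hLpos _ (by linarith)
    have hGx : G x = x^(-α) * L x := hGL x hxpos
    have hG2x : G (2*x) = (2*x)^(-α) * L (2*x) := hGL _ (by linarith)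
    have hsplit : (2*x:ℝ)^(-α) = (2:ℝ)^(-α) * x^(-α) :=
      Real.mul_rpow (by norm_num) hxpos.le
    have h42 : 4 * (2:ℝ)^(-α) = τ := by
      rw [hτdef, show ((2:ℝ)-α) = ((2:ℕ):ℝ) + (-α) by push_cast; ring,
        Real.rpow_add (by norm_num), Real.rpow_natCast]
      norm_num
    have hP0 : 0 < x^(-α) := Real.rpow_pos_of_pos hxpos _
    have hkey : lam * L x ≤ τ * L (2*x) := by
      rw [div_lt_div_iff₀ hτ0 hLx] at hrat
      linarith
    calc lam * (x^2 * G x) = (x^2 * x^(-α)) * (lam * L x) := by rw [hGx]; ring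
      _ ≤ (x^2 * x^(-α)) * (τ * L (2*x)) := by
          apply mul_le_mul_of_nonneg_left hkey (by positivity)
      _ = (2*x)^2 * G (2*x) := by
          rw [hG2x, hsplit, ← h42]; ring
  have hx₀0 : 0 < x₀ := lt_of_lt_of_le one_pos hx₀1
  set C : ℝ := 4/(lam-1) with hCdef
  have hC0 : 0 < C := by rw [hCdef]; apply div_pos (by norm_num); linarith
  have hstepρ : ∀ x, x₀ ≤ x →
      lam * (x^2 * (ρ {y | x < |y|}).toReal) ≤ (2*x)^2 * (ρ {y | 2*x < |y|}).toReal := by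
    intro x hx; rw [hρG, hρG]; exact hx₀step x hx
  -- limits
  have hNt : Tendsto (fun n : ℕ => n * p n) atTop atTop := by
    apply tendsto_atTop_mono (fun n => Nat.le_mul_of_pos_right n (hp0 n)) tendsto_id
  have haN : Tendsto (fun n : ℕ => a (n * p n)) atTop atTop := haT.comp hNt
  have hGlim : ∀ c : ℝ, 0 < c →
      Tendsto (fun n : ℕ => ((n * p n : ℕ):ℝ) * G (c * a (n * p n))) atTop
        (nhds (c^(-α))) := by
    intro c hc
    have h2 : Tendsto (fun n : ℕ => ((n * p n : ℕ):ℝ) * G (a (n * p n))) atTop (nhds 1) :=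
      ha2.comp hNt
    have h3 : Tendsto (fun n : ℕ => L (c * a (n*p n)) / L (a (n*p n))) atTop (nhds 1) :=
      (hLrat c hc).comp haN
    have h4 : ∀ᶠ n : ℕ in atTop, (0:ℝ) < a (n*p n) := haN.eventually_gt_atTop 0
    have heq : (fun n : ℕ => (((n * p n : ℕ):ℝ) * G (a (n * p n))) *
        (c^(-α) * (L (c * a (n*p n)) / L (a (n*p n)))))
        =ᶠ[atTop] (fun n : ℕ => ((n * p n : ℕ):ℝ) * G (c * a (n * p n))) := by
      filter_upwards [h4] with n hn
      have hLa : L (a (n*p n)) ≠ 0 := (hLpos _ hn).ne'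
      have hG1 : G (a (n*p n)) = (a (n*p n))^(-α) * L (a (n*p n)) := hGL _ hn
      have hG2 : G (c * a (n*p n)) = (c * a (n*p n))^(-α) * L (c * a (n*p n)) :=
        hGL _ (by positivity)
      have hsplit : (c * a (n*p n))^(-α) = c^(-α) * (a (n*p n))^(-α) :=
        Real.mul_rpow hc.le hn.le
      rw [hG1, hG2, hsplit]
      field_simp
    have hlim : Tendsto (fun n : ℕ => (((n * p n : ℕ):ℝ) * G (a (n * p n))) *
        (c^(-α) * (L (c * a (n*p n)) / L (a (n*p n))))) atTop
        (nhds (1 * (c^(-α) * 1))) := h2.mul (tendsto_const_nhds.mul h3)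
    rw [show (1 * (c^(-α) * 1) : ℝ) = c^(-α) by ring] at hlim
    exact hlim.congr' heq
  have hgρ : Tendsto (fun x : ℝ => x^2 * (ρ {y | x < |y|}).toReal) atTop atTop := by
    apply st16_g_atTop ρ x₀ lam hx₀0 hlam1 _ hstepρ
    rw [hρG]
    exact mul_pos (by positivity) (hGpos x₀ hx₀0)
  have hgG : Tendsto (fun x : ℝ => x^2 * G x) atTop atTop := by
    have : (fun x : ℝ => x^2 * (ρ {y | x < |y|}).toReal) = (fun x : ℝ => x^2 * G x) := by
      funext x; rw [hρG]
    rwa [this] at hgρ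
  have hF2 : Tendsto (fun n : ℕ => ((n * p n : ℕ):ℝ) / (a (n * p n))^2) atTop (nhds 0) := by
    have h2 : Tendsto (fun n : ℕ => ((n * p n : ℕ):ℝ) * G (a (n * p n))) atTop (nhds 1) :=
      ha2.comp hNt
    have hgga : Tendsto (fun n : ℕ => (a (n*p n))^2 * G (a (n*p n))) atTop atTop :=
      hgG.comp haN
    have hinv : Tendsto (fun n : ℕ => ((a (n*p n))^2 * G (a (n*p n)))⁻¹) atTop (nhds 0) :=
      hgga.inv_tendsto_atTop
    have h4 : ∀ᶠ n : ℕ in atTop, (0:ℝ) < a (n*p n) := haN.eventually_gt_atTop 0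
    have heq : (fun n : ℕ => (((n * p n : ℕ):ℝ) * G (a (n * p n))) *
        ((a (n*p n))^2 * G (a (n*p n)))⁻¹)
        =ᶠ[atTop] (fun n : ℕ => ((n * p n : ℕ):ℝ) / (a (n * p n))^2) := by
      filter_upwards [h4] with n hn
      have hGa : G (a (n*p n)) ≠ 0 := (hGpos _ hn).ne'
      field_simp
    have hlim := h2.mul hinv
    rw [mul_zero] at hlim
    exact hlim.congr' heq
  have hTermLim : ∀ d s : ℝ, 0 < d → 0 < s →
      Tendsto (fun n : ℕ => ((n * p n : ℕ):ℝ) *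
          (4*x₀^2 + C*((d * a (n*p n))^2 * G (d * a (n*p n)))) / ((a (n*p n))^2 * s))
        atTop (nhds (C * (d^2 * d^(-α)) / s)) := by
    intro d s hd hs
    have h4 : ∀ᶠ n : ℕ in atTop, (0:ℝ) < a (n*p n) := haN.eventually_gt_atTop 0
    have hlim : Tendsto (fun n : ℕ =>
        (4*x₀^2 * (((n * p n : ℕ):ℝ) / (a (n*p n))^2) +
          C*d^2 * (((n * p n : ℕ):ℝ) * G (d * a (n*p n)))) / s) atTop
        (nhds ((4*x₀^2 * 0 + C*d^2 * d^(-α)) / s)) := by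
      apply Tendsto.div_const
      exact (Tendsto.const_mul _ hF2).add (Tendsto.const_mul _ (hGlim d hd))
    rw [show ((4*x₀^2 * 0 + C*d^2 * d^(-α)) / s : ℝ) = C * (d^2 * d^(-α)) / s by ring] at hlim
    apply hlim.congr'
    filter_upwards [h4] with n hn
    have hne : a (n*p n) ≠ 0 := hn.ne'
    field_simp
  -- the ε-limit
  rw [ENNReal.tendsto_nhds_zero]
  intro η hη
  by_cases hηtop : η = ⊤
  · filter_upwards with ε; rw [hηtop]; exact le_top
  set b : ℝ := min 1 η.toReal with hbdef
  have hb0 : 0 < b := lt_min one_pos (ENNReal.toReal_pos hη.ne' hηtop)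
  have hb1 : b ≤ 1 := min_le_left _ _
  have hbη : ENNReal.ofReal b ≤ η := by
    calc ENNReal.ofReal b ≤ ENNReal.ofReal η.toReal :=
          ENNReal.ofReal_le_ofReal (min_le_right _ _)
      _ = η := ENNReal.ofReal_toReal hηtop
  set c : ℝ := (8/b)^(α⁻¹) with hcdef
  have hc0 : 0 < c := Real.rpow_pos_of_pos (by positivity) _
  have hcα : c^(-α) = b/8 := by
    rw [hcdef, ← Real.rpow_mul (by positivity)]
    rw [show α⁻¹ * (-α) = -1 by field_simp]
    rw [Real.rpow_neg_one]
    rw [inv_div]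
  set t : ℝ := 8*C*(c^2*c^(-α))/b with htdef
  have hcα0 : 0 < c^(-α) := Real.rpow_pos_of_pos hc0 _
  have ht0 : 0 < t := by rw [htdef]; positivity
  have ht8 : C*(c^2*c^(-α))/t = b/8 := by
    rw [htdef]
    field_simp
  set θ : ℝ := b*δ^2/(8*C*t) with hθdef
  have hθ0 : 0 < θ := by rw [hθdef]; positivity
  set ε₀ : ℝ := θ^(((2:ℝ)-α)⁻¹) with hε₀def
  have hε₀0 : 0 < ε₀ := Real.rpow_pos_of_pos hθ0 _
  have hmem : Set.Ioo (0:ℝ) ε₀ ∈ nhdsWithin 0 (Set.Ioi 0) :=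
    Ioo_mem_nhdsGT_of_mem ⟨le_refl 0, hε₀0⟩
  filter_upwards [hmem] with ε hε
  have hε0 : 0 < ε := hε.1
  have hεθ : ε^2 * ε^(-α) ≤ θ := by
    have h1 : ε^((2:ℝ)-α) = ε^2 * ε^(-α) := by
      rw [show ((2:ℝ)-α) = ((2:ℕ):ℝ) + (-α) by push_cast; ring,
        Real.rpow_add hε0, Real.rpow_natCast]
    have h2 : ε^((2:ℝ)-α) ≤ ε₀^((2:ℝ)-α) :=
      Real.rpow_le_rpow hε0.le hε.2.le (by linarith)
    have h3 : ε₀^((2:ℝ)-α) = θ := by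
      rw [hε₀def, ← Real.rpow_mul hθ0.le, inv_mul_cancel₀ (by linarith), Real.rpow_one]
    rw [← h1]; rw [← h3]; exact h2
  have hterm3 : C*(ε^2*ε^(-α))/(δ^2/t) ≤ b/8 := by
    have hq : C*θ/(δ^2/t) = b/8 := by
      rw [hθdef]
      field_simp
    calc C*(ε^2*ε^(-α))/(δ^2/t) ≤ C*θ/(δ^2/t) := by gcongr
      _ = b/8 := hq
  have hδt : 0 < δ^2/t := by positivity
  -- the dominating real sequence
  set w : ℕ → ℝ := fun n =>
    ((n * p n : ℕ):ℝ) * G (c * a (n*p n)) +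
    (((n * p n : ℕ):ℝ) * (4*x₀^2 + C*((c * a (n*p n))^2 * G (c * a (n*p n))))
        / ((a (n*p n))^2 * t) +
     ((n * p n : ℕ):ℝ) * (4*x₀^2 + C*((ε * a (n*p n))^2 * G (ε * a (n*p n))))
        / ((a (n*p n))^2 * (δ^2/t))) with hwdef
  have hwlim : Tendsto w atTop
      (nhds (c^(-α) + (C*(c^2*c^(-α))/t + C*(ε^2*ε^(-α))/(δ^2/t)))) :=
    (hGlim c hc0).add ((hTermLim c t hc0 ht0).add (hTermLim ε (δ^2/t) hε0 hδt))
  have hWlt : c^(-α) + (C*(c^2*c^(-α))/t + C*(ε^2*ε^(-α))/(δ^2/t)) < b/2 := by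
    linarith [hterm3, ht8, hcα, hb0]
  have hwev : ∀ᶠ n : ℕ in atTop, w n < b/2 := hwlim.eventually_lt_const hWlt
  have hKε : ∀ᶠ n : ℕ in atTop, x₀/ε ≤ a (n*p n) := haN.eventually_ge_atTop _
  have hKc : ∀ᶠ n : ℕ in atTop, x₀/c ≤ a (n*p n) := haN.eventually_ge_atTop _
  have hK1 : ∀ᶠ n : ℕ in atTop, (1:ℝ) ≤ a (n*p n) := haN.eventually_ge_atTop _
  have hbound : ∀ᶠ n : ℕ in atTop,
      μ {ω | δ < specNorm (truncLe (dataMat X (a (n * p n)) (p n) n ω) ε *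
          (truncGt (dataMat X (a (n * p n)) (p n) n ω) ε)ᵀ)} ≤ ENNReal.ofReal (w n) := by
    filter_upwards [hKε, hKc, hK1] with n h1 h2 h3
    set aN := a (n * p n) with haNdef
    have haN0 : (0:ℝ) < aN := lt_of_lt_of_le one_pos h3
    have hca : x₀ ≤ c * aN := by
      rw [div_le_iff₀ hc0] at h2; linarith [h2]
    have hεa : x₀ ≤ ε * aN := by
      rw [div_le_iff₀ hε0] at h1; linarith [h1]
    have haN2 : (0:ℝ) < aN^2 := by positivity
    -- Markov-type bound for the truncated square sums
    have hMarkovSum : ∀ u v : ℝ, x₀ ≤ u → 0 < v →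
        μ {ω | v < (∑ i : Fin (p n), ∑ j : Fin n,
            st16sq01 u (X (((i:ℕ)+1:ℤ), ((j:ℕ)+1:ℤ)) ω)) / aN^2}
          ≤ ENNReal.ofReal (((n * p n:ℕ):ℝ) * (4*x₀^2 + C*(u^2 * G u)) / (aN^2 * v)) := by
      intro u v hu hv
      have hQnn : 0 ≤ 4*x₀^2 + C*(u^2 * G u) := by
        have h5 : 0 ≤ C*(u^2*G u) := mul_nonneg hC0.le (mul_nonneg (sq_nonneg u) (hGnn u))
        nlinarith [sq_nonneg x₀]
      set F : Ω → ℝ := fun ω => (∑ i : Fin (p n), ∑ j : Fin n,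
          st16sq01 u (X (((i:ℕ)+1:ℤ), ((j:ℕ)+1:ℤ)) ω)) / aN^2 with hFdef
      have hFm : Measurable F := by
        apply Measurable.div_const
        apply Finset.measurable_sum
        intro i _
        apply Finset.measurable_sum
        intro j _
        exact (st16sq01_measurable u).comp (hmeas _)
      have hmk := st16_markov μ F hFm v hv
      have hlin : (∫⁻ ω, ENNReal.ofReal (F ω) ∂μ) =
          ((n * p n : ℕ) : ℝ≥0∞) * (∫⁻ y, ENNReal.ofReal (st16sq01 u y) ∂ρ)
            * (ENNReal.ofReal (aN^2))⁻¹ := by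
        have hptw : ∀ ω, ENNReal.ofReal (F ω) =
            (∑ i : Fin (p n), ∑ j : Fin n, ENNReal.ofReal
              (st16sq01 u (X (((i:ℕ)+1:ℤ), ((j:ℕ)+1:ℤ)) ω))) * (ENNReal.ofReal (aN^2))⁻¹ := by
          intro ω
          rw [hFdef]
          show ENNReal.ofReal ((∑ i : Fin (p n), ∑ j : Fin n,
              st16sq01 u (X (((i:ℕ)+1:ℤ), ((j:ℕ)+1:ℤ)) ω)) / aN^2) = _
          rw [ENNReal.ofReal_div_of_pos haN2, div_eq_mul_inv]
          congr 1
          rw [ENNReal.ofReal_sum_of_nonneg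
            (fun i _ => Finset.sum_nonneg (fun j _ => st16sq01_nonneg _ _))]
          apply Finset.sum_congr rfl
          intro i _
          rw [ENNReal.ofReal_sum_of_nonneg (fun j _ => st16sq01_nonneg _ _)]
        have hmsb : ∀ (i : Fin (p n)) (j : Fin n), Measurable (fun ω =>
            ENNReal.ofReal (st16sq01 u (X (((i:ℕ)+1:ℤ), ((j:ℕ)+1:ℤ)) ω))) :=
          fun i j => ((st16sq01_measurable u).comp (hmeas _)).ennreal_ofReal
        calc (∫⁻ ω, ENNReal.ofReal (F ω) ∂μ)
            = ∫⁻ ω, (∑ i : Fin (p n), ∑ j : Fin n, ENNReal.ofReal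
                (st16sq01 u (X (((i:ℕ)+1:ℤ), ((j:ℕ)+1:ℤ)) ω)))
                  * (ENNReal.ofReal (aN^2))⁻¹ ∂μ := lintegral_congr hptw
          _ = (∫⁻ ω, ∑ i : Fin (p n), ∑ j : Fin n, ENNReal.ofReal
                (st16sq01 u (X (((i:ℕ)+1:ℤ), ((j:ℕ)+1:ℤ)) ω)) ∂μ)
                  * (ENNReal.ofReal (aN^2))⁻¹ :=
              lintegral_mul_const' _ _
                (ENNReal.inv_ne_top.mpr (ENNReal.ofReal_pos.mpr haN2).ne')
          _ = (∑ i : Fin (p n), ∑ j : Fin n, ∫⁻ ω, ENNReal.ofReal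
                (st16sq01 u (X (((i:ℕ)+1:ℤ), ((j:ℕ)+1:ℤ)) ω)) ∂μ)
                  * (ENNReal.ofReal (aN^2))⁻¹ := by
              rw [lintegral_finset_sum _
                (fun i _ => Finset.measurable_sum _ (fun j _ => hmsb i j))]
              congr 1
              apply Finset.sum_congr rfl
              intro i _
              rw [lintegral_finset_sum _ (fun j _ => hmsb i j)]
          _ = (∑ _i : Fin (p n), ∑ _j : Fin n, ∫⁻ y, ENNReal.ofReal (st16sq01 u y) ∂ρ)
                * (ENNReal.ofReal (aN^2))⁻¹ := by
              congr 1
              apply Finset.sum_congr rfl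
              intro i _
              apply Finset.sum_congr rfl
              intro j _
              exact hint _ _ ((st16sq01_measurable u).ennreal_ofReal)
          _ = ((n * p n : ℕ) : ℝ≥0∞) * (∫⁻ y, ENNReal.ofReal (st16sq01 u y) ∂ρ)
                * (ENNReal.ofReal (aN^2))⁻¹ := by
              rw [Finset.sum_const, Finset.sum_const, Finset.card_univ, Finset.card_univ,
                Fintype.card_fin, Fintype.card_fin, smul_smul, nsmul_eq_mul, Nat.mul_comm]
      have hkar := st16_karamata ρ x₀ lam hx₀0 hlam1 hstepρ u hu
      rw [hρG u, ← hCdef] at hkar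
      calc μ {ω | v < (∑ i : Fin (p n), ∑ j : Fin n,
            st16sq01 u (X (((i:ℕ)+1:ℤ), ((j:ℕ)+1:ℤ)) ω)) / aN^2}
          ≤ (∫⁻ ω, ENNReal.ofReal (F ω) ∂μ) / ENNReal.ofReal v := hmk
        _ ≤ (((n * p n : ℕ) : ℝ≥0∞) * ENNReal.ofReal (4*x₀^2 + C*(u^2 * G u))
              * (ENNReal.ofReal (aN^2))⁻¹) / ENNReal.ofReal v := by
            rw [hlin]
            apply ENNReal.div_le_div_right
            apply mul_le_mul_left
            exact mul_le_mul_right hkar _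
        _ = ENNReal.ofReal (((n * p n:ℕ):ℝ) * (4*x₀^2 + C*(u^2 * G u)) / (aN^2 * v)) :=
            st16_conv _ _ _ _ hQnn haN2 hv
    -- union bound for the large-entry event
    have hone : ∀ q : ℤ × ℤ, μ {ω | c*aN < |X q ω|} = ENNReal.ofReal (G (c*aN)) := by
      intro q
      rw [hset q, ← hρG, ENNReal.ofReal_toReal (measure_ne_top _ _)]
    have hE₁bound : μ (⋃ (i : Fin (p n)) (j : Fin n),
        {ω | c*aN < |X (((i:ℕ)+1:ℤ), ((j:ℕ)+1:ℤ)) ω|})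
          ≤ ENNReal.ofReal (((n*p n:ℕ):ℝ) * G (c*aN)) := by
      calc μ (⋃ (i : Fin (p n)) (j : Fin n),
            {ω | c*aN < |X (((i:ℕ)+1:ℤ), ((j:ℕ)+1:ℤ)) ω|})
          ≤ ∑' (i : Fin (p n)), μ (⋃ (j : Fin n),
              {ω | c*aN < |X (((i:ℕ)+1:ℤ), ((j:ℕ)+1:ℤ)) ω|}) := measure_iUnion_le _
        _ ≤ ∑' (i : Fin (p n)), ∑' (j : Fin n),
              μ {ω | c*aN < |X (((i:ℕ)+1:ℤ), ((j:ℕ)+1:ℤ)) ω|} :=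
            ENNReal.tsum_le_tsum (fun i => measure_iUnion_le _)
        _ = ∑ i : Fin (p n), ∑ j : Fin n,
              μ {ω | c*aN < |X (((i:ℕ)+1:ℤ), ((j:ℕ)+1:ℤ)) ω|} := by
            rw [tsum_fintype]
            apply Finset.sum_congr rfl
            intro i _
            rw [tsum_fintype]
        _ = ∑ _i : Fin (p n), ∑ _j : Fin n, ENNReal.ofReal (G (c*aN)) := by
            apply Finset.sum_congr rfl
            intro i _
            apply Finset.sum_congr rfl
            intro j _
            exact hone _
        _ = ENNReal.ofReal (((n*p n:ℕ):ℝ) * G (c*aN)) := by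
            rw [Finset.sum_const, Finset.sum_const, Finset.card_univ, Finset.card_univ,
              Fintype.card_fin, Fintype.card_fin, smul_smul, nsmul_eq_mul, Nat.mul_comm,
              ← ENNReal.ofReal_natCast (n * p n),
              ← ENNReal.ofReal_mul (by positivity)]
    -- the event inclusion
    have hsub : {ω | δ < specNorm (truncLe (dataMat X aN (p n) n ω) ε *
        (truncGt (dataMat X aN (p n) n ω) ε)ᵀ)} ⊆
        (⋃ (i : Fin (p n)) (j : Fin n),
          {ω | c*aN < |X (((i:ℕ)+1:ℤ), ((j:ℕ)+1:ℤ)) ω|}) ∪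
        ({ω | t < (∑ i : Fin (p n), ∑ j : Fin n,
            st16sq01 (c*aN) (X (((i:ℕ)+1:ℤ), ((j:ℕ)+1:ℤ)) ω)) / aN^2} ∪
         {ω | δ^2/t < (∑ i : Fin (p n), ∑ j : Fin n,
            st16sq01 (ε*aN) (X (((i:ℕ)+1:ℤ), ((j:ℕ)+1:ℤ)) ω)) / aN^2}) := by
      intro ω hω
      by_contra hcon
      simp only [Set.mem_union, not_or, Set.mem_iUnion, Set.mem_setOf_eq, not_exists,
        not_lt] at hcon
      obtain ⟨hn1, hn2, hn3⟩ := hcon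
      have hsqB : st16sq (truncLe (dataMat X aN (p n) n ω) ε)
          = (∑ i : Fin (p n), ∑ j : Fin n,
              st16sq01 (ε*aN) (X (((i:ℕ)+1:ℤ), ((j:ℕ)+1:ℤ)) ω)) / aN^2 := by
        rw [st16sq, Finset.sum_div]
        apply Finset.sum_congr rfl
        intro i _
        rw [Finset.sum_div]
        apply Finset.sum_congr rfl
        intro j _
        have := st16_entry_le (X (((i:ℕ)+1:ℤ), ((j:ℕ)+1:ℤ)) ω) aN ε haN0
        simp only [truncLe, truncGt, dataMat, Matrix.sub_apply, Matrix.of_apply]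
        convert this
        split_ifs with hh <;> simp [hh]
      have hsqA : st16sq (dataMat X aN (p n) n ω)
          = (∑ i : Fin (p n), ∑ j : Fin n,
              st16sq01 (c*aN) (X (((i:ℕ)+1:ℤ), ((j:ℕ)+1:ℤ)) ω)) / aN^2 := by
        rw [st16sq, Finset.sum_div]
        apply Finset.sum_congr rfl
        intro i _
        rw [Finset.sum_div]
        apply Finset.sum_congr rfl
        intro j _
        have hcase : |X (((i:ℕ)+1:ℤ), ((j:ℕ)+1:ℤ)) ω| ≤ c*aN := hn1 i j
        simp only [dataMat, Matrix.of_apply, st16sq01, if_pos hcase, div_pow]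
      have hsqC : st16sq (truncGt (dataMat X aN (p n) n ω) ε)
          ≤ st16sq (dataMat X aN (p n) n ω) := by
        unfold st16sq
        apply Finset.sum_le_sum
        intro i _
        apply Finset.sum_le_sum
        intro j _
        simp only [truncGt, Matrix.of_apply]
        split
        · exact le_refl _
        · simpa using sq_nonneg _
      have hkey := st16_det_key (truncLe (dataMat X aN (p n) n ω) ε)
        (truncGt (dataMat X aN (p n) n ω) ε)
      have hω' : δ < specNorm (truncLe (dataMat X aN (p n) n ω) ε *
          (truncGt (dataMat X aN (p n) n ω) ε)ᵀ) := hω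
      have hδ2 : δ^2 < specNorm (truncLe (dataMat X aN (p n) n ω) ε *
          (truncGt (dataMat X aN (p n) n ω) ε)ᵀ)^2 :=
        pow_lt_pow_left₀ hω' hδ.le (by norm_num)
      have hA_le : st16sq (dataMat X aN (p n) n ω) ≤ t := by rw [hsqA]; exact hn2
      have hB_le : st16sq (truncLe (dataMat X aN (p n) n ω) ε) ≤ δ^2/t := by
        rw [hsqB]; exact hn3
      have hprod : st16sq (truncLe (dataMat X aN (p n) n ω) ε) *
          st16sq (truncGt (dataMat X aN (p n) n ω) ε) ≤ (δ^2/t) * t := by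
        apply mul_le_mul hB_le (le_trans hsqC hA_le) (st16sq_nonneg _) (by positivity)
      have heq : (δ^2/t)*t = δ^2 := by field_simp
      linarith [hkey, hprod, hδ2, heq]
    -- assembling
    calc μ {ω | δ < specNorm (truncLe (dataMat X aN (p n) n ω) ε *
          (truncGt (dataMat X aN (p n) n ω) ε)ᵀ)}
        ≤ μ ((⋃ (i : Fin (p n)) (j : Fin n),
            {ω | c*aN < |X (((i:ℕ)+1:ℤ), ((j:ℕ)+1:ℤ)) ω|}) ∪
          ({ω | t < (∑ i : Fin (p n), ∑ j : Fin n,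
              st16sq01 (c*aN) (X (((i:ℕ)+1:ℤ), ((j:ℕ)+1:ℤ)) ω)) / aN^2} ∪
           {ω | δ^2/t < (∑ i : Fin (p n), ∑ j : Fin n,
              st16sq01 (ε*aN) (X (((i:ℕ)+1:ℤ), ((j:ℕ)+1:ℤ)) ω)) / aN^2})) :=
          measure_mono hsub
      _ ≤ μ (⋃ (i : Fin (p n)) (j : Fin n),
            {ω | c*aN < |X (((i:ℕ)+1:ℤ), ((j:ℕ)+1:ℤ)) ω|}) +
          μ ({ω | t < (∑ i : Fin (p n), ∑ j : Fin n,
              st16sq01 (c*aN) (X (((i:ℕ)+1:ℤ), ((j:ℕ)+1:ℤ)) ω)) / aN^2} ∪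
           {ω | δ^2/t < (∑ i : Fin (p n), ∑ j : Fin n,
              st16sq01 (ε*aN) (X (((i:ℕ)+1:ℤ), ((j:ℕ)+1:ℤ)) ω)) / aN^2}) :=
          measure_union_le _ _
      _ ≤ μ (⋃ (i : Fin (p n)) (j : Fin n),
            {ω | c*aN < |X (((i:ℕ)+1:ℤ), ((j:ℕ)+1:ℤ)) ω|}) +
          (μ {ω | t < (∑ i : Fin (p n), ∑ j : Fin n,
              st16sq01 (c*aN) (X (((i:ℕ)+1:ℤ), ((j:ℕ)+1:ℤ)) ω)) / aN^2} +
           μ {ω | δ^2/t < (∑ i : Fin (p n), ∑ j : Fin n,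
              st16sq01 (ε*aN) (X (((i:ℕ)+1:ℤ), ((j:ℕ)+1:ℤ)) ω)) / aN^2}) :=
          add_le_add_right (measure_union_le _ _) _
      _ ≤ ENNReal.ofReal (((n*p n:ℕ):ℝ) * G (c*aN)) +
          (ENNReal.ofReal (((n * p n:ℕ):ℝ) * (4*x₀^2 + C*((c*aN)^2 * G (c*aN)))
              / (aN^2 * t)) +
           ENNReal.ofReal (((n * p n:ℕ):ℝ) * (4*x₀^2 + C*((ε*aN)^2 * G (ε*aN)))
              / (aN^2 * (δ^2/t)))) :=
          add_le_add hE₁bound (add_le_add (hMarkovSum (c*aN) t hca ht0)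
            (hMarkovSum (ε*aN) (δ^2/t) hεa hδt))
      _ = ENNReal.ofReal (w n) := by
          rw [hwdef]
          have g1 : (0:ℝ) ≤ ((n * p n:ℕ):ℝ) * (4*x₀^2 + C*((c*aN)^2 * G (c*aN)))
              / (aN^2 * t) := by
            have h5 : 0 ≤ C*((c*aN)^2*G (c*aN)) :=
              mul_nonneg hC0.le (mul_nonneg (sq_nonneg _) (hGnn _))
            have h6 : (0:ℝ) ≤ 4*x₀^2 + C*((c*aN)^2 * G (c*aN)) := by nlinarith [sq_nonneg x₀]
            positivity
          have g2 : (0:ℝ) ≤ ((n * p n:ℕ):ℝ) * (4*x₀^2 + C*((ε*aN)^2 * G (ε*aN)))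
              / (aN^2 * (δ^2/t)) := by
            have h5 : 0 ≤ C*((ε*aN)^2*G (ε*aN)) :=
              mul_nonneg hC0.le (mul_nonneg (sq_nonneg _) (hGnn _))
            have h6 : (0:ℝ) ≤ 4*x₀^2 + C*((ε*aN)^2 * G (ε*aN)) := by nlinarith [sq_nonneg x₀]
            positivity
          rw [← ENNReal.ofReal_add g1 g2, ← ENNReal.ofReal_add
            (mul_nonneg (Nat.cast_nonneg _) (hGnn _)) (add_nonneg g1 g2)]
  have hfinal : ∀ᶠ n : ℕ in atTop,
      μ {ω | δ < specNorm (truncLe (dataMat X (a (n * p n)) (p n) n ω) ε *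
          (truncGt (dataMat X (a (n * p n)) (p n) n ω) ε)ᵀ)}
        ≤ ENNReal.ofReal (b/2) := by
    filter_upwards [hbound, hwev] with n hn1 hn2
    exact le_trans hn1 (ENNReal.ofReal_le_ofReal hn2.le)
  refine le_trans (Filter.limsup_le_of_le (by isBoundedDefault) hfinal) ?_
  exact le_trans (ENNReal.ofReal_le_ofReal (by linarith)) hbη
end
end
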